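/- arXiv:1602.01033 — 5 statements merged into one kernel-verified Lean document; each statement's English description precedes it below -/
import Mathlib

section
/- If G is a 2-connected graph of order n such that d(u) + d(v) ≥ n+1 for every pair of distinct nonadjacent vertices u and v, then G is Hamiltonian-connected, i.e., any two vertices of G are joined by a Hamiltonian path. -/
open SimpleGraph Finset

/-- Spectral radius (largest adjacency eigenvalue) of a graph on `Fin n`. -/
noncomputable def specRad {n : ℕ} (G : SimpleGraph (Fin n)) : ℝ :=
  haveI := Classical.decRel G.Adj
  ⨆ i, (Matrix.IsHermitian.eigenvalues
    (by
      rw [Matrix.IsHermitian, Matrix.conjTranspose_eq_transpose_of_trivial]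
      exact G.isSymm_adjMatrix : (G.adjMatrix ℝ).IsHermitian)) i

/-- `M_k(n) = K_k ∨ (K_{n-2k} + K̄_k)`: vertices `0..k-1` are the independent set,
vertices `k..2k-1` their joint neighborhood, vertices `k..n-1` a clique. -/
def Mgraph (k n : ℕ) : SimpleGraph (Fin n) where
  Adj i j := i ≠ j ∧ ((k ≤ i.val ∧ k ≤ j.val) ∨
    (i.val < k ∧ k ≤ j.val ∧ j.val < 2 * k) ∨ (j.val < k ∧ k ≤ i.val ∧ i.val < 2 * k))
  symm := by constructor; intro i j h; exact ⟨h.1.symm, by tauto⟩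
  loopless := by constructor; intro i h; exact h.1 rfl

instance (k n : ℕ) : DecidableRel (Mgraph k n).Adj := fun _ _ => instDecidableAnd

/-- `L_k(n) = K_1 ∨ (K_{n-k-1} + K_k)`: a `K_{k+1}` on vertices `0..k` and a
`K_{n-k}` on vertices `k..n-1`, sharing the vertex `k`. -/
def Lgraph (k n : ℕ) : SimpleGraph (Fin n) where
  Adj i j := i ≠ j ∧ ((i.val ≤ k ∧ j.val ≤ k) ∨ (k ≤ i.val ∧ k ≤ j.val))
  symm := by constructor; intro i j h; exact ⟨h.1.symm, by tauto⟩
  loopless := by constructor; intro i h; exact h.1 rfl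

instance (k n : ℕ) : DecidableRel (Lgraph k n).Adj := fun _ _ => instDecidableAnd

/-- `N_k(n) = K_k ∨ (K_{n-2k-1} + K̄_{k+1})`: vertices `0..k` are the independent set,
vertices `k+1..2k` their joint neighborhood, vertices `k+1..n-1` a clique. -/
def Ngraph (k n : ℕ) : SimpleGraph (Fin n) where
  Adj i j := i ≠ j ∧ ((k + 1 ≤ i.val ∧ k + 1 ≤ j.val) ∨
    (i.val < k + 1 ∧ k + 1 ≤ j.val ∧ j.val < 2 * k + 1) ∨
    (j.val < k + 1 ∧ k + 1 ≤ i.val ∧ i.val < 2 * k + 1))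
  symm := by constructor; intro i j h; exact ⟨h.1.symm, by tauto⟩
  loopless := by constructor; intro i h; exact h.1 rfl

instance (k n : ℕ) : DecidableRel (Ngraph k n).Adj := fun _ _ => instDecidableAnd

/-- The disjoint union `K_a + K_{n-a}` on `Fin n`: vertices `0..a-1` form one clique,
vertices `a..n-1` the other. -/
def DUgraph (a n : ℕ) : SimpleGraph (Fin n) where
  Adj i j := i ≠ j ∧ ((i.val < a ∧ j.val < a) ∨ (a ≤ i.val ∧ a ≤ j.val))
  symm := by constructor; intro i j h; exact ⟨h.1.symm, by tauto⟩
  loopless := by constructor; intro i h; exact h.1 rfl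

instance (a n : ℕ) : DecidableRel (DUgraph a n).Adj := fun _ _ => instDecidableAnd

/-- `G` has a Hamiltonian path. -/
def HasHamiltonianPath {V : Type*} [DecidableEq V] (G : SimpleGraph V) : Prop :=
  ∃ (u v : V) (p : G.Walk u v), p.IsHamiltonian

/-- `G` is Hamiltonian-connected. -/
def HamiltonianConnected {V : Type*} [DecidableEq V] (G : SimpleGraph V) : Prop :=
  ∀ u v : V, u ≠ v → ∃ p : G.Walk u v, p.IsHamiltonian



/-- A Hamiltonian sequence: an enumeration of the `n` vertices starting at `u`,
ending at `v`, with consecutive vertices adjacent. -/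
def HSeq {V : Type*} (G : SimpleGraph V) (n : ℕ) (u v : V) : Prop :=
  ∃ F : ℕ → V,
    (∀ i, i < n → ∀ j, j < n → F i = F j → i = j) ∧
    (∀ x : V, ∃ i, i < n ∧ F i = x) ∧
    F 0 = u ∧ F (n - 1) = v ∧
    (∀ j, j + 1 < n → G.Adj (F j) (F (j + 1)))

lemma hseq_reverse {V : Type*} (G : SimpleGraph V) (n : ℕ) (u v : V)
    (F : ℕ → V) (l r tb : ℕ) (hlr : l < r) (hr : r + 1 < n)
    (htb : tb = l ∨ tb = r)
    (hinj : ∀ i, i < n → ∀ j, j < n → F i = F j → i = j)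
    (hsurj : ∀ x : V, ∃ i, i < n ∧ F i = x)
    (h0 : F 0 = u) (hlast : F (n - 1) = v)
    (hA : ∀ j, j + 1 < n → j ≠ tb → G.Adj (F j) (F (j + 1)))
    (e1 : G.Adj (F l) (F r)) (e2 : G.Adj (F (l + 1)) (F (r + 1))) :
    HSeq G n u v := by
  set σ : ℕ → ℕ := fun j => if l + 1 ≤ j ∧ j ≤ r then l + 1 + r - j else j with hσ
  have hσσ : ∀ j, σ (σ j) = j := by
    intro j
    by_cases h : l + 1 ≤ j ∧ j ≤ r
    · have h1 : σ j = l + 1 + r - j := if_pos h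
      have h2 : l + 1 ≤ l + 1 + r - j ∧ l + 1 + r - j ≤ r := by omega
      rw [h1, hσ]; simp only [if_pos h2]; omega
    · have h1 : σ j = j := if_neg h
      rw [h1, h1]
  have hσlt : ∀ j, j < n → σ j < n := by
    intro j hj
    by_cases h : l + 1 ≤ j ∧ j ≤ r
    · have : σ j = l + 1 + r - j := if_pos h
      omega
    · have : σ j = j := if_neg h
      omega
  refine ⟨fun j => F (σ j), ?_, ?_, ?_, ?_, ?_⟩
  · intro i hi j hj hij
    have := hinj (σ i) (hσlt i hi) (σ j) (hσlt j hj) hij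
    have := congrArg σ this
    rwa [hσσ, hσσ] at this
  · intro x
    obtain ⟨i, hi, hFi⟩ := hsurj x
    refine ⟨σ i, hσlt i hi, ?_⟩
    show F (σ (σ i)) = x
    rw [hσσ]; exact hFi
  · show F (σ 0) = u
    have : σ 0 = 0 := if_neg (by omega)
    rw [this, h0]
  · show F (σ (n - 1)) = v
    have : σ (n - 1) = n - 1 := if_neg (by omega)
    rw [this, hlast]
  · intro j hj
    show G.Adj (F (σ j)) (F (σ (j + 1)))
    rcases lt_trichotomy j l with hc | hc | hc
    · -- j + 1 ≤ l
      have s1 : σ j = j := if_neg (by omega)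
      have s2 : σ (j + 1) = j + 1 := if_neg (by omega)
      rw [s1, s2]
      exact hA j hj (by omega)
    · -- j = l
      subst hc
      have s1 : σ j = j := if_neg (by omega)
      have s2 : σ (j + 1) = r := by
        have : σ (j + 1) = j + 1 + r - (j + 1) := if_pos (by omega)
        omega
      rw [s1, s2]; exact e1
    · rcases lt_trichotomy j r with hc2 | hc2 | hc2
      · -- l + 1 ≤ j, j + 1 ≤ r : reversed interior
        have s1 : σ j = l + 1 + r - j := if_pos (by omega)
        have s2 : σ (j + 1) = l + 1 + r - (j + 1) := if_pos (by omega)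
        set k := l + 1 + r - j with hk
        have hk1 : l + 1 + r - (j + 1) = k - 1 := by omega
        have hkk : k - 1 + 1 = k := by omega
        rw [s1, s2, hk1]
        have := hA (k - 1) (by omega) (by omega)
        rw [hkk] at this
        exact this.symm
      · -- j = r
        subst hc2
        have s1 : σ j = l + 1 := by
          have : σ j = l + 1 + j - j := if_pos (by omega)
          omega
        have s2 : σ (j + 1) = j + 1 := if_neg (by omega)
        rw [s1, s2]; exact e2
      · -- j ≥ r + 1
        have s1 : σ j = j := if_neg (by omega)
        have s2 : σ (j + 1) = j + 1 := if_neg (by omega)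
        rw [s1, s2]
        exact hA j hj (by omega)



lemma walk_of_seq {V : Type*} [DecidableEq V] (G : SimpleGraph V) (n : ℕ) (F : ℕ → V)
    (hadj : ∀ j, j + 1 < n → G.Adj (F j) (F (j + 1))) :
    ∀ k i, i + k + 1 = n →
      ∃ p : G.Walk (F i) (F (n - 1)), p.support = (List.range (k + 1)).map (fun j => F (i + j)) := by
  intro k
  induction k with
  | zero =>
    intro i hi
    have : i = n - 1 := by omega
    subst this
    exact ⟨SimpleGraph.Walk.nil, by simp [List.range_succ]⟩
  | succ k ih =>
    intro i hi
    obtain ⟨p, hp⟩ := ih (i + 1) (by omega)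
    refine ⟨SimpleGraph.Walk.cons (hadj i (by omega)) p, ?_⟩
    rw [SimpleGraph.Walk.support_cons, hp]
    conv_rhs => rw [List.range_succ_eq_map]
    simp only [List.map_cons, List.map_map, Nat.add_zero]
    congr 1
    apply List.map_congr_left
    intro j _
    simp only [Function.comp_apply]
    congr 1
    omega

lemma hseq_hamiltonian {V : Type*} [DecidableEq V] [Fintype V] (G : SimpleGraph V) (n : ℕ)
    (hn : 1 ≤ n) (hcard : Fintype.card V = n) (u v : V) (h : HSeq G n u v) :
    ∃ p : G.Walk u v, p.IsHamiltonian := by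
  obtain ⟨F, hinj, hsurj, h0, hlast, hadj⟩ := h
  obtain ⟨p, hp⟩ := walk_of_seq G n F hadj (n - 1) 0 (by omega)
  have hsupp : p.support = (List.range n).map F := by
    rw [hp]
    have : n - 1 + 1 = n := by omega
    rw [this]
    apply List.map_congr_left
    intro j _
    simp
  refine ⟨p.copy h0 hlast, ?_⟩
  intro x
  rw [SimpleGraph.Walk.support_copy, hsupp]
  apply List.count_eq_one_of_mem
  · apply List.Nodup.map_on
    · intro a ha b hb hab
      exact hinj a (List.mem_range.mp ha) b (List.mem_range.mp hb) hab
    · exact List.nodup_range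
  · obtain ⟨i, hi, hFi⟩ := hsurj x
    exact List.mem_map.mpr ⟨i, List.mem_range.mpr hi, hFi⟩

lemma complete_hseq {n : ℕ} (hn : 2 ≤ n) (G : SimpleGraph (Fin n))
    (hG : ∀ x y : Fin n, x ≠ y → G.Adj x y) (u v : Fin n) (huv : u ≠ v) :
    HSeq G n u v := by
  have hlast0 : (⟨n - 1, by omega⟩ : Fin n) ≠ ⟨0, by omega⟩ := by
    intro h
    have := congrArg Fin.val h
    simp at this
    omega
  set c : Equiv.Perm (Fin n) := Equiv.swap ⟨0, by omega⟩ u with hc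
  set w : Fin n := c.symm v with hw
  have hw0 : w ≠ ⟨0, by omega⟩ := by
    intro h
    apply huv
    have : v = c ⟨0, by omega⟩ := by rw [← h, hw]; simp
    rw [this, hc, Equiv.swap_apply_left]
  set d : Equiv.Perm (Fin n) := Equiv.swap w ⟨n - 1, by omega⟩ with hd
  set g : Fin n → Fin n := fun i => c (d i) with hg
  have hginj : Function.Injective g := (c.injective.comp d.injective)
  have hg0 : g ⟨0, by omega⟩ = u := by
    rw [hg]
    simp only
    rw [hd, Equiv.swap_apply_of_ne_of_ne (Ne.symm hw0) (Ne.symm hlast0), hc,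
      Equiv.swap_apply_left]
  have hglast : g ⟨n - 1, by omega⟩ = v := by
    rw [hg]
    simp only
    rw [hd, Equiv.swap_apply_right, hw]
    simp
  refine ⟨fun i => if h : i < n then g ⟨i, h⟩ else v, ?_, ?_, ?_, ?_, ?_⟩
  · intro i hi j hj hij
    simp only at hij
    rw [dif_pos hi, dif_pos hj] at hij
    have := hginj hij
    exact congrArg Fin.val this
  · intro x
    obtain ⟨y, hy⟩ := (d.trans c).surjective x
    refine ⟨y.val, y.isLt, ?_⟩
    simp only
    rw [dif_pos y.isLt]
    rw [← hy]
    rfl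
  · show (if h : 0 < n then g ⟨0, h⟩ else v) = u
    rw [dif_pos (by omega : 0 < n)]
    exact hg0
  · show (if h : n - 1 < n then g ⟨n - 1, h⟩ else v) = v
    rw [dif_pos (by omega : n - 1 < n)]
    exact hglast
  · intro j hj
    show G.Adj (if h : j < n then g ⟨j, h⟩ else v) (if h : j + 1 < n then g ⟨j + 1, h⟩ else v)
    rw [dif_pos (by omega : j < n), dif_pos hj]
    apply hG
    intro h
    have := hginj h
    have := congrArg Fin.val this
    simp at this




lemma core_lemma {n : ℕ} (G : SimpleGraph (Fin n)) [inst : DecidableRel G.Adj]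
    (a b u v : Fin n) (hab : ¬G.Adj a b)
    (hdeg : n + 1 ≤ (univ.filter (fun y => G.Adj a y)).card +
      (univ.filter (fun y => G.Adj b y)).card)
    (F : ℕ → Fin n)
    (hinj : ∀ i, i < n → ∀ j, j < n → F i = F j → i = j)
    (hsurj : ∀ x : Fin n, ∃ i, i < n ∧ F i = x)
    (h0 : F 0 = u) (hlast : F (n - 1) = v)
    (t : ℕ) (ht : t + 1 < n) (hta : F t = a) (htb : F (t + 1) = b)
    (hA : ∀ j, j + 1 < n → j ≠ t → G.Adj (F j) (F (j + 1))) :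
    HSeq G n u v := by
  have hcardA : ((range n).filter (fun j => G.Adj a (F j))).card =
      (univ.filter (fun y => G.Adj a y)).card := by
    apply Finset.card_bij (fun j _ => F j)
    · intro j hj
      simp only [mem_filter, mem_range] at hj
      simp [hj.2]
    · intro i hi j hj hFij
      simp only [mem_filter, mem_range] at hi hj
      exact hinj i hi.1 j hj.1 hFij
    · intro y hy
      simp only [mem_filter, mem_univ, true_and] at hy
      obtain ⟨i, hi, hFi⟩ := hsurj y
      exact ⟨i, by simp [mem_filter, mem_range, hi, hFi, hy], hFi⟩
  have hcardB : ((range n).filter (fun j => G.Adj b (F j))).card =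
      (univ.filter (fun y => G.Adj b y)).card := by
    apply Finset.card_bij (fun j _ => F j)
    · intro j hj
      simp only [mem_filter, mem_range] at hj
      simp [hj.2]
    · intro i hi j hj hFij
      simp only [mem_filter, mem_range] at hi hj
      exact hinj i hi.1 j hj.1 hFij
    · intro y hy
      simp only [mem_filter, mem_univ, true_and] at hy
      obtain ⟨i, hi, hFi⟩ := hsurj y
      exact ⟨i, by simp [mem_filter, mem_range, hi, hFi, hy], hFi⟩
  set S := (range (n - 1)).filter (fun j => G.Adj a (F j)) with hS
  set T := (range (n - 1)).filter (fun j => G.Adj b (F (j + 1))) with hT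
  have hScard : (univ.filter (fun y => G.Adj a y)).card ≤ S.card + 1 := by
    rw [← hcardA]
    have hsub : (range n).filter (fun j => G.Adj a (F j)) ⊆ insert (n - 1) S := by
      intro j hj
      simp only [mem_filter, mem_range] at hj
      by_cases hj' : j = n - 1
      · subst hj'; exact mem_insert_self _ _
      · exact mem_insert_of_mem (by simp only [hS, mem_filter, mem_range]; exact ⟨by omega, hj.2⟩)
    calc ((range n).filter (fun j => G.Adj a (F j))).card ≤ (insert (n - 1) S).card :=
          card_le_card hsub
      _ ≤ S.card + 1 := card_insert_le _ _
  have hTcard : (univ.filter (fun y => G.Adj b y)).card ≤ T.card + 1 := by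
    rw [← hcardB]
    have hsub : (range n).filter (fun j => G.Adj b (F j)) ⊆ insert 0 (T.image (· + 1)) := by
      intro j hj
      simp only [mem_filter, mem_range] at hj
      by_cases hj' : j = 0
      · subst hj'; exact mem_insert_self _ _
      · apply mem_insert_of_mem
        apply Finset.mem_image.mpr
        refine ⟨j - 1, ?_, by omega⟩
        simp only [hT, mem_filter, mem_range]
        constructor
        · omega
        · have : j - 1 + 1 = j := by omega
          rw [this]; exact hj.2
    calc ((range n).filter (fun j => G.Adj b (F j))).card ≤ (insert 0 (T.image (· + 1))).card :=
          card_le_card hsub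
      _ ≤ (T.image (· + 1)).card + 1 := card_insert_le _ _
      _ ≤ T.card + 1 := by
          have := Finset.card_image_le (s := T) (f := (· + 1))
          omega
  have htS : t ∉ S := by
    simp only [hS, mem_filter, mem_range]
    rintro ⟨-, h⟩
    rw [hta] at h
    exact G.irrefl h
  have htT : t ∉ T := by
    simp only [hT, mem_filter, mem_range]
    rintro ⟨-, h⟩
    rw [htb] at h
    exact G.irrefl h
  have hUsub : S ∪ T ⊆ (range (n - 1)).erase t := by
    intro j hj
    rcases Finset.mem_union.mp hj with h | h
    · exact Finset.mem_erase.mpr ⟨fun hh => htS (hh ▸ h), (mem_filter.mp h).1⟩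
    · exact Finset.mem_erase.mpr ⟨fun hh => htT (hh ▸ h), (mem_filter.mp h).1⟩
  have hUcard : (S ∪ T).card ≤ n - 2 := by
    calc (S ∪ T).card ≤ ((range (n - 1)).erase t).card := card_le_card hUsub
      _ = n - 2 := by
          rw [Finset.card_erase_of_mem (by simp only [mem_range]; omega)]
          simp only [card_range]
          omega
  have hinter : 1 ≤ (S ∩ T).card := by
    rw [← hcardA, ← hcardB] at hdeg
    have h1 := Finset.card_union_add_card_inter S T
    omega
  obtain ⟨t0, ht0⟩ := Finset.card_pos.mp (show 0 < (S ∩ T).card by omega)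
  have ht0' := Finset.mem_inter.mp ht0
  have ht0S := mem_filter.mp ht0'.1
  have ht0T := mem_filter.mp ht0'.2
  have ht0n : t0 < n - 1 := mem_range.mp ht0S.1
  have haF : G.Adj a (F t0) := ht0S.2
  have hbF : G.Adj b (F (t0 + 1)) := ht0T.2
  have ht0t : t0 ≠ t := fun h => G.irrefl (hta ▸ h ▸ haF)
  have ht0t1 : t0 ≠ t + 1 := fun h => hab (htb ▸ h ▸ haF)
  have ht01t : t0 + 1 ≠ t := fun h => hab (G.adj_symm (hta ▸ h ▸ hbF))
  rcases lt_or_gt_of_ne ht0t with hlt | hgt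
  · exact hseq_reverse G n u v F t0 t t hlt ht (Or.inr rfl) hinj hsurj h0 hlast hA
      (by rw [hta]; exact haF.symm) (by rw [htb]; exact hbF.symm)
  · exact hseq_reverse G n u v F t t0 t (by omega) (by omega) (Or.inl rfl) hinj hsurj h0 hlast hA
      (by rw [hta]; exact haF) (by rw [htb]; exact hbF)





/-- `G` with the extra edge `ab`. -/
def addE {V : Type*} (G : SimpleGraph V) (a b : V) (hne : a ≠ b) : SimpleGraph V where
  Adj x y := G.Adj x y ∨ (x = a ∧ y = b) ∨ (x = b ∧ y = a)
  symm := by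
    constructor
    rintro x y (h | ⟨rfl, rfl⟩ | ⟨rfl, rfl⟩)
    · exact Or.inl h.symm
    · exact Or.inr (Or.inr ⟨rfl, rfl⟩)
    · exact Or.inr (Or.inl ⟨rfl, rfl⟩)
  loopless := by
    constructor
    rintro x (h | ⟨rfl, h2⟩ | ⟨rfl, h2⟩)
    · exact G.irrefl h
    · exact hne h2
    · exact hne h2.symm

lemma key_lemma {n : ℕ} (G : SimpleGraph (Fin n)) [inst : DecidableRel G.Adj]
    (a b u v : Fin n) (hne : a ≠ b) (hab : ¬G.Adj a b)
    (hdeg : n + 1 ≤ (univ.filter (fun y => G.Adj a y)).card +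
      (univ.filter (fun y => G.Adj b y)).card)
    (h : HSeq (addE G a b hne) n u v) : HSeq G n u v := by
  obtain ⟨F, hinj, hsurj, h0, hlast, hadj⟩ := h
  by_cases hall : ∀ j, j + 1 < n → G.Adj (F j) (F (j + 1))
  · exact ⟨F, hinj, hsurj, h0, hlast, hall⟩
  push_neg at hall
  obtain ⟨t, ht, htn⟩ := hall
  have hGt : (F t = a ∧ F (t + 1) = b) ∨ (F t = b ∧ F (t + 1) = a) := by
    rcases hadj t ht with hh | hh | hh
    · exact absurd hh htn
    · exact Or.inl hh
    · exact Or.inr hh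
  rcases hGt with ⟨hta, htb⟩ | ⟨hta, htb⟩
  · have hA : ∀ j, j + 1 < n → j ≠ t → G.Adj (F j) (F (j + 1)) := by
      intro j hj hjt
      rcases hadj j hj with hh | ⟨h1, h2⟩ | ⟨h1, h2⟩
      · exact hh
      · exact absurd (hinj j (by omega) t (by omega) (h1.trans hta.symm)) hjt
      · have e1 := hinj j (by omega) (t + 1) (by omega) (h1.trans htb.symm)
        have e2 := hinj (j + 1) (by omega) t (by omega) (h2.trans hta.symm)
        omega
    exact core_lemma G a b u v hab hdeg F hinj hsurj h0 hlast t ht hta htb hA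
  · have hA : ∀ j, j + 1 < n → j ≠ t → G.Adj (F j) (F (j + 1)) := by
      intro j hj hjt
      rcases hadj j hj with hh | ⟨h1, h2⟩ | ⟨h1, h2⟩
      · exact hh
      · have e1 := hinj j (by omega) (t + 1) (by omega) (h1.trans htb.symm)
        have e2 := hinj (j + 1) (by omega) t (by omega) (h2.trans hta.symm)
        omega
      · exact absurd (hinj j (by omega) t (by omega) (h1.trans hta.symm)) hjt
    exact core_lemma G b a u v (fun hh => hab hh.symm) (by omega) F hinj hsurj h0 hlast
      t ht hta htb hA

/-- The set of nonadjacent ordered pairs. -/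
def badPairs {n : ℕ} (G : SimpleGraph (Fin n)) [DecidableRel G.Adj] : Finset (Fin n × Fin n) :=
  (univ ×ˢ univ).filter (fun p => p.1 ≠ p.2 ∧ ¬ G.Adj p.1 p.2)

lemma main_aux {n : ℕ} (hn : 2 ≤ n) :
    ∀ (m : ℕ) (G : SimpleGraph (Fin n)) (inst : DecidableRel G.Adj),
      (badPairs G).card ≤ m →
      (∀ x y : Fin n, x ≠ y → ¬G.Adj x y →
        n + 1 ≤ (univ.filter (fun z => G.Adj x z)).card +
          (univ.filter (fun z => G.Adj y z)).card) →
      ∀ u v : Fin n, u ≠ v → HSeq G n u v := by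
  intro m
  induction m with
  | zero =>
    intro G inst hm hdeg u v huv
    refine complete_hseq hn G ?_ u v huv
    intro x y hxy
    by_contra hnadj
    have : (x, y) ∈ badPairs G := by
      simp only [badPairs, mem_filter, mem_product, mem_univ, true_and]
      exact ⟨hxy, hnadj⟩
    have := Finset.card_pos.mpr ⟨_, this⟩
    omega
  | succ m ih =>
    intro G inst hm hdeg u v huv
    by_cases hcomp : ∀ x y : Fin n, x ≠ y → G.Adj x y
    · exact complete_hseq hn G hcomp u v huv
    push_neg at hcomp
    obtain ⟨a, b, hne, hnadj⟩ := hcomp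
    haveI inst' : DecidableRel (addE G a b hne).Adj := fun x y =>
      inferInstanceAs (Decidable (G.Adj x y ∨ (x = a ∧ y = b) ∨ (x = b ∧ y = a)))
    have hsub : badPairs (addE G a b hne) ⊂ badPairs G := by
      constructor
      · intro p hp
        simp only [badPairs, mem_filter, mem_product, mem_univ, true_and] at hp ⊢
        exact ⟨hp.1, fun hh => hp.2 (Or.inl hh)⟩
      · intro hsub2
        have hmem : (a, b) ∈ badPairs G := by
          simp only [badPairs, mem_filter, mem_product, mem_univ, true_and]
          exact ⟨hne, hnadj⟩
        have := hsub2 hmem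
        simp only [badPairs, mem_filter, mem_product, mem_univ, true_and] at this
        exact this.2 (Or.inr (Or.inl ⟨rfl, rfl⟩))
    have hcount : (badPairs (addE G a b hne)).card ≤ m := by
      have := Finset.card_lt_card hsub
      omega
    have hdeg' : ∀ x y : Fin n, x ≠ y → ¬(addE G a b hne).Adj x y →
        n + 1 ≤ (univ.filter (fun z => (addE G a b hne).Adj x z)).card +
          (univ.filter (fun z => (addE G a b hne).Adj y z)).card := by
      intro x y hxy hxy'
      have hnadjG : ¬G.Adj x y := fun hh => hxy' (Or.inl hh)
      have hx : (univ.filter (fun z => G.Adj x z)).card ≤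
          (univ.filter (fun z => (addE G a b hne).Adj x z)).card := by
        apply card_le_card
        intro z hz
        simp only [mem_filter, mem_univ, true_and] at hz ⊢
        exact Or.inl hz
      have hy : (univ.filter (fun z => G.Adj y z)).card ≤
          (univ.filter (fun z => (addE G a b hne).Adj y z)).card := by
        apply card_le_card
        intro z hz
        simp only [mem_filter, mem_univ, true_and] at hz ⊢
        exact Or.inl hz
      have := hdeg x y hxy hnadjG
      omega
    have hseq' := ih (addE G a b hne) inst' hcount hdeg' u v huv
    exact key_lemma G a b u v hne hnadj (hdeg a b hne hnadj) hseq'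


/-- Ore's theorem for Hamiltonian-connectedness: if `G` is `2`-connected and
`d(u) + d(v) ≥ n + 1` for all distinct nonadjacent `u, v`, then `G` is
Hamiltonian-connected. -/
theorem stmt_3 (n : ℕ) (hn : 3 ≤ n) (G : SimpleGraph (Fin n)) [DecidableRel G.Adj]
    (hconn : G.Connected)
    (h2conn : ∀ v : Fin n, (G.induce ({v}ᶜ : Set (Fin n))).Connected)
    (h : ∀ u v : Fin n, u ≠ v → ¬ G.Adj u v → n + 1 ≤ G.degree u + G.degree v) :
    HamiltonianConnected G := by
  intro u v huv
  have hdegfilter : ∀ x y : Fin n, x ≠ y → ¬G.Adj x y →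
      n + 1 ≤ (univ.filter (fun z => G.Adj x z)).card +
        (univ.filter (fun z => G.Adj y z)).card := by
    intro x y hxy hnadj
    have hx : G.degree x = (univ.filter (fun z => G.Adj x z)).card := by
      rw [← SimpleGraph.neighborFinset_eq_filter]
      rfl
    have hy : G.degree y = (univ.filter (fun z => G.Adj y z)).card := by
      rw [← SimpleGraph.neighborFinset_eq_filter]
      rfl
    have := h x y hxy hnadj
    rw [hx, hy] at this
    exact this
  exact hseq_hamiltonian G n (by omega) (Fintype.card_fin n) u v
    (main_aux (by omega) (badPairs G).card G ‹DecidableRel G.Adj› le_rfl hdegfilter u v huv)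
end

section
/- Let G be a graph of order n with degree sequence d_1 ≤ d_2 ≤ ... ≤ d_n. If G has no Hamiltonian cycle, then there exists an integer s with 1 ≤ s < n/2 such that d_s ≤ s and d_{n-s} ≤ n-s-1. -/
open SimpleGraph Finset

namespace Chvatal

variable {n : ℕ}

/-- A Hamiltonian cycle given as a function: indices `0..n-1` are distinct vertices
and consecutive ones (cyclically) are adjacent. -/
def HamCycFn (G : SimpleGraph (Fin n)) (c : ℕ → Fin n) : Prop :=
  (∀ i j, i < n → j < n → c i = c j → i = j) ∧
  (∀ i, i < n → G.Adj (c i) (c ((i + 1) % n)))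

/-- A Hamiltonian path given as a function. -/
def HamPathFn (G : SimpleGraph (Fin n)) (p : ℕ → Fin n) : Prop :=
  (∀ i j, i < n → j < n → p i = p j → i = j) ∧
  (∀ i, i + 1 < n → G.Adj (p i) (p (i + 1)))

lemma surj_of_inj (p : ℕ → Fin n) (hinj : ∀ i j, i < n → j < n → p i = p j → i = j) :
    ∀ v : Fin n, ∃ i, i < n ∧ p i = v := by
  intro v
  have hcard : ((Finset.range n).image p).card = n := by
    rw [Finset.card_image_of_injOn, Finset.card_range]
    intro i hi j hj hij
    exact hinj i j (Finset.mem_range.1 hi) (Finset.mem_range.1 hj) hij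
  have : (Finset.range n).image p = Finset.univ := by
    apply Finset.eq_of_subset_of_card_le (Finset.subset_univ _)
    rw [hcard, Finset.card_univ, Fintype.card_fin]
  have hv : v ∈ (Finset.range n).image p := this ▸ Finset.mem_univ v
  obtain ⟨i, hi, hpi⟩ := Finset.mem_image.1 hv
  exact ⟨i, Finset.mem_range.1 hi, hpi⟩

/-- Build a walk from a function with consecutive adjacencies. -/
def walkOfFn (G : SimpleGraph (Fin n)) (f : ℕ → Fin n) :
    ∀ m, (∀ i, i + 1 ≤ m → G.Adj (f i) (f (i + 1))) → G.Walk (f 0) (f m)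
  | 0, _ => Walk.nil
  | (m + 1), h => (walkOfFn G f m (fun i hi => h i (by omega))).concat (h m (by omega))

lemma support_walkOfFn (G : SimpleGraph (Fin n)) (f : ℕ → Fin n) (m : ℕ)
    (h : ∀ i, i + 1 ≤ m → G.Adj (f i) (f (i + 1))) :
    (walkOfFn G f m h).support = (List.range (m + 1)).map f := by
  induction m with
  | zero => simp [walkOfFn, List.range_succ]
  | succ m ih =>
      rw [walkOfFn, Walk.support_concat, ih, List.range_succ (n := m + 1), List.map_append]
      simp

lemma mem_edges_walkOfFn (G : SimpleGraph (Fin n)) (f : ℕ → Fin n) (m : ℕ)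
    (h : ∀ i, i + 1 ≤ m → G.Adj (f i) (f (i + 1))) {e : Sym2 (Fin n)}
    (he : e ∈ (walkOfFn G f m h).edges) : ∃ i, i < m ∧ e = s(f i, f (i + 1)) := by
  induction m with
  | zero => simp [walkOfFn, Walk.edges] at he
  | succ m ih =>
      rw [walkOfFn, Walk.edges_concat, List.concat_eq_append, List.mem_append, List.mem_singleton] at he
      rcases he with he | he
      · obtain ⟨i, hi, hie⟩ := ih _ he
        exact ⟨i, by omega, hie⟩
      · exact ⟨m, by omega, he⟩

lemma exists_hamCycFn (hn : 3 ≤ n) {G : SimpleGraph (Fin n)} (h : G.IsHamiltonian) :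
    ∃ c, HamCycFn G c := by
  obtain ⟨a, w, hw⟩ := h (by rw [Fintype.card_fin]; omega)
  have hlen : w.length = n := by rw [hw.length_eq, Fintype.card_fin]
  have hL : w.support.length = n + 1 := by rw [Walk.length_support, hlen]
  have h0 : w.support.getD 0 a = a := by
    obtain ⟨t, ht⟩ : ∃ t, w.support = a :: t := ⟨w.support.tail, w.support_eq_cons⟩
    rw [ht]; rfl
  have hlast : w.support.getD n a = a := by
    rw [List.getD_eq_getElem _ _ (by omega)]
    have := w.getLast_support
    rw [List.getLast_eq_getElem] at this
    simpa [hL] using this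
  have hchain := List.isChain_iff_getElem.1 w.isChain_adj_support
  have gD : ∀ k (hk : k ≤ n), w.support.getD k a = w.support[k]'(by omega) := by
    intro k hk
    exact List.getD_eq_getElem _ _ (by omega)
  have hadj : ∀ i, i < n → G.Adj (w.support.getD i a) (w.support.getD (i+1) a) := by
    intro i hi
    have h3 := hchain i (by omega)
    rw [gD i (by omega), gD (i+1) (by omega)]
    simpa using h3
  have hnd : w.support.tail.Nodup := hw.isCycle.support_nodup
  have htl : w.support.tail.length = n := by rw [List.length_tail, hL]; omega
  have htail : ∀ k (hk : k < n), w.support.tail[k]'(by omega) = w.support.getD (k+1) a := by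
    intro k hk
    rw [List.getElem_tail, gD (k+1) (by omega)]
  have hinj : ∀ i j, i < n → j < n → w.support.getD i a = w.support.getD j a → i = j := by
    have key : ∀ i j, i < j → j < n → w.support.getD i a ≠ w.support.getD j a := by
      intro i j hij hj heq
      rcases Nat.eq_zero_or_pos i with rfl | hi
      · have h1 : w.support.tail[j-1]'(by omega) = w.support.tail[n-1]'(by omega) := by
          rw [htail (j-1) (by omega), htail (n-1) (by omega)]
          rw [show j - 1 + 1 = j by omega, show n - 1 + 1 = n by omega, ← heq, h0, hlast]
        have := hnd.getElem_inj_iff.1 h1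
        omega
      · have h1 : w.support.tail[i-1]'(by omega) = w.support.tail[j-1]'(by omega) := by
          rw [htail (i-1) (by omega), htail (j-1) (by omega),
            show i - 1 + 1 = i by omega, show j - 1 + 1 = j by omega, heq]
        have := hnd.getElem_inj_iff.1 h1
        omega
    intro i j hi hj heq
    rcases Nat.lt_trichotomy i j with h | h | h
    · exact absurd heq (key i j h hj)
    · exact h
    · exact absurd heq.symm (key j i h hi)
  refine ⟨fun i => w.support.getD i a, hinj, ?_⟩
  intro i hi
  show G.Adj (w.support.getD i a) (w.support.getD ((i+1) % n) a)
  rcases Nat.lt_or_ge (i+1) n with h | h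
  · rw [Nat.mod_eq_of_lt h]
    exact hadj i hi
  · have hi' : i = n - 1 := by omega
    have h2 : (i + 1) % n = 0 := by rw [show i + 1 = n by omega, Nat.mod_self]
    have h3 := hadj (n-1) (by omega)
    rw [show n - 1 + 1 = n by omega, hlast] at h3
    rw [h2, h0, hi']
    exact h3

lemma isHamiltonian_of_hamCycFn (hn : 3 ≤ n) {G : SimpleGraph (Fin n)} (c : ℕ → Fin n)
    (hc : HamCycFn G c) : G.IsHamiltonian := by
  obtain ⟨hinj, hadj⟩ := hc
  have hn0 : 0 < n := by omega
  set f : ℕ → Fin n := fun i => c ((1 + i) % n) with hf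
  have hfadj : ∀ i, i + 1 ≤ n - 1 → G.Adj (f i) (f (i + 1)) := by
    intro i hi
    show G.Adj (c ((1 + i) % n)) (c ((1 + (i + 1)) % n))
    rw [Nat.mod_eq_of_lt (by omega : 1 + i < n), show 1 + (i + 1) = (1 + i) + 1 by omega]
    exact hadj (1 + i) (by omega)
  have hfinj : ∀ i j, i < n → j < n → f i = f j → i = j := by
    intro i j hi hj heq
    have h1 := hinj ((1 + i) % n) ((1 + j) % n) (Nat.mod_lt _ hn0) (Nat.mod_lt _ hn0) heq
    rcases Nat.lt_or_ge (1 + i) n with h | h <;> rcases Nat.lt_or_ge (1 + j) n with h' | h'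
    · rw [Nat.mod_eq_of_lt h, Nat.mod_eq_of_lt h'] at h1; omega
    · rw [Nat.mod_eq_of_lt h, show 1 + j = n by omega, Nat.mod_self] at h1; omega
    · rw [show 1 + i = n by omega, Nat.mod_self, Nat.mod_eq_of_lt h'] at h1; omega
    · omega
  let q := walkOfFn G f (n - 1) hfadj
  have hsupp : q.support = (List.range n).map f := by
    rw [support_walkOfFn, Nat.sub_add_cancel (by omega)]
  have hnd : q.support.Nodup := by
    rw [hsupp]
    refine List.Nodup.map_on ?_ List.nodup_range
    intro i hi j hj hij
    exact hfinj i j (List.mem_range.1 hi) (List.mem_range.1 hj) hij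
  have hqpath : q.IsPath := Walk.IsPath.mk' hnd
  have hend : f (n - 1) = c 0 := by
    show c ((1 + (n - 1)) % n) = c 0
    rw [show 1 + (n - 1) = n by omega, Nat.mod_self]
  have h0 : G.Adj (c 0) (f 0) := by
    show G.Adj (c 0) (c ((1 + 0) % n))
    simpa using hadj 0 (by omega)
  let q' : G.Walk (f 0) (c 0) := q.copy rfl hend
  have hedge : s(c 0, f 0) ∉ q'.edges := by
    intro hmem
    rw [Walk.edges_copy] at hmem
    obtain ⟨i, hi, hie⟩ := mem_edges_walkOfFn G f (n - 1) hfadj hmem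
    rw [Sym2.eq_iff] at hie
    rcases hie with ⟨he1, he2⟩ | ⟨he1, he2⟩
    · have := hinj 0 ((1 + i) % n) (by omega) (Nat.mod_lt _ hn0) he1
      rw [Nat.mod_eq_of_lt (by omega : 1 + i < n)] at this
      omega
    · -- he1 : c 0 = f (i + 1), he2 : f 0 = f i
      have h2 := hfinj 0 i (by omega) (by omega) he2
      subst h2
      have := hinj 0 ((1 + (0 + 1)) % n) (by omega) (Nat.mod_lt _ hn0) he1
      rw [Nat.mod_eq_of_lt (by omega : 1 + (0 + 1) < n)] at this
      omega
  let w : G.Walk (c 0) (c 0) := Walk.cons h0 q'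
  have hcyc : w.IsCycle := (Walk.cons_isCycle_iff q' h0).2 ⟨(Walk.isPath_copy _ _ _).2 hqpath, hedge⟩
  have hsurj : ∀ v : Fin n, v ∈ q'.support := by
    intro v
    have hcard : ((Finset.range n).image c).card = n := by
      rw [Finset.card_image_of_injOn, Finset.card_range]
      intro i hi j hj hij
      exact hinj i j (Finset.mem_range.1 hi) (Finset.mem_range.1 hj) hij
    have huniv : (Finset.range n).image c = Finset.univ := by
      apply Finset.eq_of_subset_of_card_le (Finset.subset_univ _)
      rw [hcard, Finset.card_univ, Fintype.card_fin]
    obtain ⟨k, hk, hck⟩ := Finset.mem_image.1 (huniv ▸ Finset.mem_univ v)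
    rw [Finset.mem_range] at hk
    rw [Walk.support_copy, hsupp]
    rcases Nat.eq_zero_or_pos k with rfl | hkpos
    · refine List.mem_map.2 ⟨n - 1, List.mem_range.2 (by omega), ?_⟩
      rw [hend, hck]
    · refine List.mem_map.2 ⟨k - 1, List.mem_range.2 (by omega), ?_⟩
      show c ((1 + (k - 1)) % n) = v
      rw [show 1 + (k - 1) = k by omega, Nat.mod_eq_of_lt hk, hck]
  have hw : w.IsHamiltonianCycle := by
    rw [Walk.isHamiltonianCycle_iff_isCycle_and_support_count_tail_eq_one]
    refine ⟨hcyc, ?_⟩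
    intro v
    have : w.support = c 0 :: q'.support := Walk.support_cons _ _
    rw [this, List.tail_cons]
    exact List.count_eq_one_of_mem (by rwa [Walk.support_copy]) (hsurj v)
  exact fun _ => ⟨c 0, w, hw⟩


lemma mod_inj (hn0 : 0 < n) {a j k : ℕ} (hj : j < n) (hk : k < n)
    (h : (a + j) % n = (a + k) % n) : j = k := by
  exact (Nat.ModEq.add_left_cancel' a h).eq_of_lt_of_lt hj hk

lemma hamPathFn_rev {G' : SimpleGraph (Fin n)} {p : ℕ → Fin n} (hp : HamPathFn G' p) :
    HamPathFn G' (fun j => p (n - 1 - j)) := by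
  obtain ⟨hinj, hadj⟩ := hp
  constructor
  · intro j k hj hk heq
    have := hinj (n - 1 - j) (n - 1 - k) (by omega) (by omega) heq
    omega
  · intro j hj
    show G'.Adj (p (n - 1 - j)) (p (n - 1 - (j + 1)))
    have e1 : n - 1 - j = (n - 1 - (j + 1)) + 1 := by omega
    rw [e1]
    exact (hadj (n - 1 - (j + 1)) (by omega)).symm

lemma hamCycFn_of_cross (hn : 3 ≤ n) {G' : SimpleGraph (Fin n)} (p : ℕ → Fin n)
    (hp : HamPathFn G' p) (i : ℕ) (hi : i + 1 < n)
    (h1 : G'.Adj (p 0) (p (i + 1))) (h2 : G'.Adj (p i) (p (n - 1))) :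
    ∃ c, HamCycFn G' c := by
  obtain ⟨hinj, hadj⟩ := hp
  set m := n - 1 - i with hm
  have hm1 : 1 ≤ m := by omega
  refine ⟨fun j => if j < m then p (i + 1 + j) else p (n - 1 - j), ?_, ?_⟩
  · intro j k hj hk heq
    simp only at heq
    split_ifs at heq with hjm hkm hkm
    · have := hinj _ _ (by omega) (by omega) heq; omega
    · have := hinj _ _ (by omega) (by omega) heq; omega
    · have := hinj _ _ (by omega) (by omega) heq; omega
    · have := hinj _ _ (by omega) (by omega) heq; omega
  · intro j hj
    show G'.Adj (if j < m then p (i + 1 + j) else p (n - 1 - j))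
      (if (j + 1) % n < m then p (i + 1 + (j + 1) % n) else p (n - 1 - (j + 1) % n))
    rcases Nat.lt_or_ge (j + 1) n with hjn | hjn
    · rw [Nat.mod_eq_of_lt hjn]
      rcases Nat.lt_trichotomy (j + 1) m with h | h | h
      · rw [if_pos (by omega), if_pos h]
        have e1 : i + 1 + (j + 1) = (i + 1 + j) + 1 := by omega
        rw [e1]
        exact hadj (i + 1 + j) (by omega)
      · rw [if_pos (by omega), if_neg (by omega)]
        have e1 : i + 1 + j = n - 1 := by omega
        have e2 : n - 1 - (j + 1) = i := by omega
        rw [e1, e2]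
        exact h2.symm
      · rw [if_neg (by omega), if_neg (by omega)]
        have e1 : n - 1 - j = (n - 1 - (j + 1)) + 1 := by omega
        rw [e1]
        exact (hadj (n - 1 - (j + 1)) (by omega)).symm
    · have hj1 : j = n - 1 := by omega
      have e0 : (j + 1) % n = 0 := by rw [show j + 1 = n by omega, Nat.mod_self]
      rw [e0, if_neg (by omega), if_pos (by omega)]
      have e1 : n - 1 - j = 0 := by omega
      rw [e1]
      simpa using h1

lemma hamCycFn_of_complete (hn : 3 ≤ n) {G' : SimpleGraph (Fin n)}
    (h : ∀ x y : Fin n, x ≠ y → G'.Adj x y) : ∃ c, HamCycFn G' c := by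
  refine ⟨fun i => ⟨i % n, Nat.mod_lt _ (by omega)⟩, ?_, ?_⟩
  · intro i j hi hj heq
    have h2 := congrArg Fin.val heq
    simp only at h2
    rwa [Nat.mod_eq_of_lt hi, Nat.mod_eq_of_lt hj] at h2
  · intro i hi
    apply h
    apply Fin.ne_of_val_ne
    show i % n ≠ ((i + 1) % n) % n
    rw [Nat.mod_eq_of_lt hi, Nat.mod_eq_of_lt (Nat.mod_lt _ (by omega : 0 < n))]
    rcases Nat.lt_or_ge (i + 1) n with h' | h'
    · rw [Nat.mod_eq_of_lt h']; omega
    · rw [show i + 1 = n by omega, Nat.mod_self]; omega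

lemma exists_hamPathFn (hn : 3 ≤ n) {G' : SimpleGraph (Fin n)} (hG' : ¬G'.IsHamiltonian)
    (hmax : ∀ H : SimpleGraph (Fin n), G' ≤ H → ¬H.IsHamiltonian → H = G')
    {u v : Fin n} (huv : u ≠ v) (hnadj : ¬G'.Adj u v) :
    ∃ p, HamPathFn G' p ∧ ((p 0 = u ∧ p (n - 1) = v) ∨ (p 0 = v ∧ p (n - 1) = u)) := by
  classical
  have hn0 : 0 < n := by omega
  set H := G' ⊔ SimpleGraph.fromEdgeSet {s(u, v)} with hH
  have hle : G' ≤ H := le_sup_left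
  have hHuv : H.Adj u v := by
    rw [hH]
    exact Or.inr (by rw [SimpleGraph.fromEdgeSet_adj]; exact ⟨rfl, huv⟩)
  have hne : H ≠ G' := fun h => hnadj (h ▸ hHuv)
  have hHam : H.IsHamiltonian := by
    by_contra h
    exact hne (hmax H hle h)
  obtain ⟨c, hinj, hadj⟩ := exists_hamCycFn hn hHam
  have hGadj : ∀ x y, H.Adj x y → s(x, y) ≠ s(u, v) → G'.Adj x y := by
    intro x y hxy hne'
    rcases (SimpleGraph.sup_adj _ _ _ _).1 hxy with h | h
    · exact h
    · rw [SimpleGraph.fromEdgeSet_adj] at h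
      exact absurd (Set.mem_singleton_iff.1 h.1) hne'
  by_cases hex : ∃ i, i < n ∧ s(c i, c ((i + 1) % n)) = s(u, v)
  · obtain ⟨i, hi, hie⟩ := hex
    have hi1 : (i + 1) % n < n := Nat.mod_lt _ hn0
    refine ⟨fun j => c ((i + 1 + j) % n), ⟨?_, ?_⟩, ?_⟩
    · intro j k hj hk heq
      exact mod_inj hn0 hj hk (hinj _ _ (Nat.mod_lt _ hn0) (Nat.mod_lt _ hn0) heq)
    · intro j hj
      show G'.Adj (c ((i + 1 + j) % n)) (c ((i + 1 + (j + 1)) % n))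
      set a := (i + 1 + j) % n with ha
      have haa : a < n := Nat.mod_lt _ hn0
      have e1 : (i + 1 + (j + 1)) % n = (a + 1) % n := by
        rw [ha, Nat.mod_add_mod, show i + 1 + j + 1 = i + 1 + (j + 1) from by omega]
      rw [e1]
      refine hGadj _ _ (hadj a haa) ?_
      rw [← hie]
      intro hcon
      rw [Sym2.eq_iff] at hcon
      rcases hcon with ⟨he1, he2⟩ | ⟨he1, he2⟩
      · -- c a = c i
        have hai : a = i := by
          have := hinj a i haa hi he1
          exact this
        have h3 : (i + (1 + j)) % n = (i + 0) % n := by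
          rw [show i + (1 + j) = i + 1 + j from by omega, ← ha, hai, Nat.add_zero,
            Nat.mod_eq_of_lt hi]
        have h4 := mod_inj hn0 (by omega : 1 + j < n) hn0 h3
        omega
      · -- c a = c ((i+1) % n), c ((a+1) % n) = c i
        have hj0 : j = 0 := by
          have h3 : (i + 1 + j) % n = (i + 1 + 0) % n := by
            rw [← ha, Nat.add_zero]
            exact hinj _ _ haa (Nat.mod_lt _ hn0) he1
          exact mod_inj hn0 (by omega) hn0 h3
        subst hj0
        have h4 : (a + 1) % n = i := hinj _ _ (Nat.mod_lt _ hn0) hi he2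
        have h5 : (i + 2) % n = (i + 0) % n := by
          have : (a + 1) % n = (i + 1 + 1) % n := by
            rw [ha, Nat.mod_add_mod]
          rw [show i + 2 = i + 1 + 1 from by omega, ← this, h4, Nat.add_zero,
            Nat.mod_eq_of_lt hi]
        have := mod_inj hn0 (by omega : 2 < n) hn0 h5
        omega
    · have hp0 : (fun j => c ((i + 1 + j) % n)) 0 = c ((i + 1) % n) := by
        show c ((i + 1 + 0) % n) = c ((i + 1) % n)
        rw [Nat.add_zero]
      have hpn : (fun j => c ((i + 1 + j) % n)) (n - 1) = c i := by
        show c ((i + 1 + (n - 1)) % n) = c i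
        rw [show i + 1 + (n - 1) = i + n from by omega, Nat.add_mod_right,
          Nat.mod_eq_of_lt hi]
      rw [Sym2.eq_iff] at hie
      rcases hie with ⟨he1, he2⟩ | ⟨he1, he2⟩
      · exact Or.inr ⟨by rw [hp0, he2], by rw [hpn, he1]⟩
      · exact Or.inl ⟨by rw [hp0, he2], by rw [hpn, he1]⟩
  · push_neg at hex
    exact absurd (isHamiltonian_of_hamCycFn hn c
      ⟨hinj, fun i hi => hGadj _ _ (hadj i hi) (hex i hi)⟩) hG'

lemma sorted_bound {d : Fin n → ℕ} (hmono : Monotone d) (σ : Fin n ≃ Fin n) (D : Fin n → ℕ)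
    (hperm : ∀ i, d i = D (σ i)) (c m : ℕ) (hm1 : 1 ≤ m) (hmn : m ≤ n)
    (hcard : m ≤ (Finset.univ.filter fun w => D w ≤ c).card) :
    d ⟨m - 1, by omega⟩ ≤ c := by
  classical
  set A := Finset.univ.filter fun w => D w ≤ c with hA
  set B := A.image σ.symm with hB
  have hBcard : m ≤ B.card := by
    rw [hB, Finset.card_image_of_injective _ σ.symm.injective]
    exact hcard
  have hexj : ∃ j ∈ B, m - 1 ≤ (j : Fin n).val := by
    by_contra hcon
    push_neg at hcon
    have hle := Finset.card_le_card_of_injOn (fun x : Fin n => (x : ℕ))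
      (fun x hx => Finset.mem_range.2 (hcon x hx)) (fun a _ b _ h => Fin.val_injective h)
    rw [Finset.card_range] at hle
    omega
  obtain ⟨j, hjB, hjval⟩ := hexj
  have h1 : d ⟨m - 1, by omega⟩ ≤ d j := hmono (by rw [Fin.le_def]; exact hjval)
  obtain ⟨w, hwA, hwj⟩ := Finset.mem_image.1 hjB
  have h2 : σ j = w := by rw [← hwj]; simp
  have h3 : D w ≤ c := (Finset.mem_filter.1 hwA).2
  rw [hperm j, h2] at h1
  exact le_trans h1 h3

end Chvatal

/-- Chvátal's theorem: if `G` has no Hamiltonian cycle, there is `1 ≤ s < n/2`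
with `d_s ≤ s` and `d_{n-s} ≤ n - s - 1` (degrees in nondecreasing order). -/
theorem stmt_4 (n : ℕ) (hn : 3 ≤ n) (G : SimpleGraph (Fin n)) [DecidableRel G.Adj]
    (d : Fin n → ℕ) (hmono : Monotone d)
    (hperm : ∃ σ : Fin n ≃ Fin n, ∀ i, d i = G.degree (σ i))
    (hG : ¬ G.IsHamiltonian) :
    ∃ s : ℕ, ∃ h1 : 1 ≤ s, ∃ h2 : 2 * s < n,
      d ⟨s - 1, by omega⟩ ≤ s ∧ d ⟨n - s - 1, by omega⟩ ≤ n - s - 1 := by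
  classical
  obtain ⟨σ, hσ⟩ := hperm
  obtain ⟨G', hG'mem, hG'max⟩ := Set.Finite.exists_maximalFor id
    {H : SimpleGraph (Fin n) | G ≤ H ∧ ¬H.IsHamiltonian} (Set.toFinite _) ⟨G, le_refl G, hG⟩
  obtain ⟨hGG', hG'ham⟩ := hG'mem
  have hmax : ∀ H : SimpleGraph (Fin n), G' ≤ H → ¬H.IsHamiltonian → H = G' := by
    intro H hle hH
    exact le_antisymm (hG'max (show G ≤ H ∧ ¬H.IsHamiltonian from ⟨le_trans hGG' hle, hH⟩) hle) hle
  set deg : Fin n → ℕ := fun w => (Finset.univ.filter fun x => G'.Adj w x).card with hdeg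
  have hpair : ∃ x y : Fin n, x ≠ y ∧ ¬G'.Adj x y := by
    by_contra hcon
    push_neg at hcon
    obtain ⟨c, hc⟩ := Chvatal.hamCycFn_of_complete hn (G' := G') hcon
    exact hG'ham (Chvatal.isHamiltonian_of_hamCycFn hn c hc)
  set P := Finset.univ.filter (fun q : Fin n × Fin n => q.1 ≠ q.2 ∧ ¬G'.Adj q.1 q.2) with hP
  have hPne : P.Nonempty := by
    obtain ⟨x, y, h1, h2⟩ := hpair
    exact ⟨(x, y), by simp [hP, h1, h2]⟩
  obtain ⟨q0, hq0, hqmax⟩ := Finset.exists_max_image P (fun q => deg q.1 + deg q.2) hPne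
  rw [hP, Finset.mem_filter] at hq0
  obtain ⟨-, hq1, hq2⟩ := hq0
  have hqmax' : ∀ x y : Fin n, x ≠ y → ¬G'.Adj x y → deg x + deg y ≤ deg q0.1 + deg q0.2 :=
    fun x y h1 h2 => hqmax (x, y) (by simp [hP, h1, h2])
  obtain ⟨u, v, huv, hnadj, hdeguv, hmaxp⟩ : ∃ u v : Fin n, u ≠ v ∧ ¬G'.Adj u v ∧
      deg u ≤ deg v ∧ ∀ x y : Fin n, x ≠ y → ¬G'.Adj x y → deg x + deg y ≤ deg u + deg v := by
    rcases le_or_gt (deg q0.1) (deg q0.2) with h | h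
    · exact ⟨q0.1, q0.2, hq1, hq2, h, hqmax'⟩
    · exact ⟨q0.2, q0.1, Ne.symm hq1, fun hc => hq2 hc.symm, le_of_lt h,
        fun x y h1 h2 => by have := hqmax' x y h1 h2; omega⟩
  obtain ⟨p0, hp0, hp0end⟩ := Chvatal.exists_hamPathFn hn hG'ham hmax huv hnadj
  obtain ⟨p, hp, hpu, hpv⟩ : ∃ p, Chvatal.HamPathFn G' p ∧ p 0 = u ∧ p (n - 1) = v := by
    rcases hp0end with ⟨h1, h2⟩ | ⟨h1, h2⟩
    · exact ⟨p0, hp0, h1, h2⟩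
    · refine ⟨fun j => p0 (n - 1 - j), Chvatal.hamPathFn_rev hp0, ?_, ?_⟩
      · show p0 (n - 1 - 0) = u
        rw [Nat.sub_zero, h2]
      · show p0 (n - 1 - (n - 1)) = v
        rw [Nat.sub_self, h1]
  have hpsurj : ∀ w : Fin n, ∃ k, k < n ∧ p k = w := Chvatal.surj_of_inj p hp.1
  have hnc : ∀ i, i + 1 < n → ¬(G'.Adj u (p (i + 1)) ∧ G'.Adj (p i) v) := by
    rintro i hi ⟨h1, h2⟩
    obtain ⟨c, hc⟩ := Chvatal.hamCycFn_of_cross hn p hp i hi (by rwa [hpu]) (by rwa [hpv])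
    exact hG'ham (Chvatal.isHamiltonian_of_hamCycFn hn c hc)
  set S := (Finset.range (n - 1)).filter (fun i => G'.Adj v (p i)) with hS
  set T := (Finset.range (n - 1)).filter (fun i => G'.Adj u (p (i + 1))) with hT
  have hScard : S.card = deg v := by
    simp only [hdeg]
    apply Finset.card_bij (fun a _ => p a)
    · intro a ha
      rw [Finset.mem_filter]
      exact ⟨Finset.mem_univ _, (Finset.mem_filter.1 ha).2⟩
    · intro a ha b hb hab
      rw [hS, Finset.mem_filter, Finset.mem_range] at ha hb
      exact hp.1 a b (by omega) (by omega) hab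
    · intro x hx
      rw [Finset.mem_filter] at hx
      obtain ⟨k, hk, hpk⟩ := hpsurj x
      have hxv : x ≠ v := hx.2.ne'
      have hkn : k ≠ n - 1 := by
        intro h
        rw [h, hpv] at hpk
        exact hxv hpk.symm
      exact ⟨k, Finset.mem_filter.2 ⟨Finset.mem_range.2 (by omega), by rw [hpk]; exact hx.2⟩, hpk⟩
  have hTcard : T.card = deg u := by
    simp only [hdeg]
    apply Finset.card_bij (fun a _ => p (a + 1))
    · intro a ha
      rw [Finset.mem_filter]
      exact ⟨Finset.mem_univ _, (Finset.mem_filter.1 ha).2⟩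
    · intro a ha b hb hab
      rw [hT, Finset.mem_filter, Finset.mem_range] at ha hb
      have := hp.1 (a + 1) (b + 1) (by omega) (by omega) hab
      omega
    · intro x hx
      rw [Finset.mem_filter] at hx
      obtain ⟨k, hk, hpk⟩ := hpsurj x
      have hxu : x ≠ u := hx.2.ne'
      have hk0 : k ≠ 0 := by
        intro h
        rw [h, hpu] at hpk
        exact hxu hpk.symm
      have he : k - 1 + 1 = k := by omega
      refine ⟨k - 1, Finset.mem_filter.2 ⟨Finset.mem_range.2 (by omega), ?_⟩, ?_⟩
      · rw [he, hpk]
        exact hx.2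
      · rw [he, hpk]
  have hdisj : Disjoint S T := by
    rw [Finset.disjoint_left]
    intro i hiS hiT
    rw [hS, Finset.mem_filter, Finset.mem_range] at hiS
    rw [hT, Finset.mem_filter, Finset.mem_range] at hiT
    exact hnc i (by omega) ⟨hiT.2, hiS.2.symm⟩
  have hsum : deg u + deg v ≤ n - 1 := by
    have hcu := Finset.card_union_of_disjoint hdisj
    have hsub : S ∪ T ⊆ Finset.range (n - 1) := by
      intro x hx
      rcases Finset.mem_union.1 hx with h | h
      · exact Finset.mem_of_mem_filter _ (hS ▸ h)
      · exact Finset.mem_of_mem_filter _ (hT ▸ h)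
    have hle := Finset.card_le_card hsub
    rw [hcu, Finset.card_range] at hle
    omega
  have hadj01 : G'.Adj u (p 1) := by
    have := hp.2 0 (by omega)
    rwa [hpu] at this
  have hs1 : 1 ≤ deg u := by
    simp only [hdeg]
    exact Finset.card_pos.2 ⟨p 1, Finset.mem_filter.2 ⟨Finset.mem_univ _, hadj01⟩⟩
  have hs2 : 2 * deg u < n := by omega
  have hclaimA : deg u ≤ (Finset.univ.filter fun w => deg w ≤ deg u).card := by
    rw [← hTcard]
    apply Finset.card_le_card_of_injOn (fun a => p a)
    · intro a ha
      rw [hT, Finset.mem_coe, Finset.mem_filter, Finset.mem_range] at ha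
      obtain ⟨ha1, ha2⟩ := ha
      rw [Finset.mem_coe, Finset.mem_filter]
      refine ⟨Finset.mem_univ _, ?_⟩
      have hne : p a ≠ v := by
        intro h
        have := hp.1 a (n - 1) (by omega) (by omega) (h.trans hpv.symm)
        omega
      have hnadj2 : ¬G'.Adj (p a) v := fun h => hnc a (by omega) ⟨ha2, h⟩
      have := hmaxp (p a) v hne hnadj2
      exact (by omega : deg (p a) ≤ T.card)
    · intro a ha b hb hab
      rw [Finset.mem_coe, hT, Finset.mem_filter, Finset.mem_range] at ha hb
      exact hp.1 a b (by omega) (by omega) hab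
  have huN : u ∉ (Finset.univ.filter fun x => G'.Adj u x) := by
    simp [SimpleGraph.irrefl]
  set A := Finset.univ \ insert u (Finset.univ.filter fun x => G'.Adj u x) with hA
  have hAcard : A.card = n - (deg u + 1) := by
    rw [hA, Finset.card_sdiff_of_subset (Finset.subset_univ _), Finset.card_univ, Fintype.card_fin,
      Finset.card_insert_of_notMem huN]
  have huA : u ∉ A := by simp [hA]
  have hclaimB : n - deg u ≤ (Finset.univ.filter fun w => deg w ≤ n - 1 - deg u).card := by
    have hsub : insert u A ⊆ Finset.univ.filter fun w => deg w ≤ n - 1 - deg u := by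
      intro w hw
      rw [Finset.mem_filter]
      refine ⟨Finset.mem_univ _, ?_⟩
      rcases Finset.mem_insert.1 hw with rfl | hw
      · omega
      · rw [hA, Finset.mem_sdiff, Finset.mem_insert] at hw
        push_neg at hw
        obtain ⟨-, hw1, hw2⟩ := hw
        have hnadj3 : ¬G'.Adj u w := by
          intro hc
          exact hw2 (Finset.mem_filter.2 ⟨Finset.mem_univ _, hc⟩)
        have := hmaxp u w (Ne.symm hw1) hnadj3
        omega
    have hle := Finset.card_le_card hsub
    rw [Finset.card_insert_of_notMem huA, hAcard] at hle
    omega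
  have hdegG : ∀ w, G.degree w ≤ deg w := by
    intro w
    rw [← SimpleGraph.card_neighborFinset_eq_degree]
    apply Finset.card_le_card
    intro x hx
    rw [SimpleGraph.mem_neighborFinset] at hx
    exact Finset.mem_filter.2 ⟨Finset.mem_univ _, hGG' hx⟩
  have hfilter : ∀ c : ℕ, (Finset.univ.filter fun w => deg w ≤ c) ⊆
      (Finset.univ.filter fun w => G.degree w ≤ c) := by
    intro c w hw
    rw [Finset.mem_filter] at hw ⊢
    exact ⟨hw.1, le_trans (hdegG w) hw.2⟩
  refine ⟨deg u, hs1, hs2, ?_, ?_⟩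
  · exact Chvatal.sorted_bound hmono σ (fun w => G.degree w) hσ (deg u) (deg u) hs1 (by omega)
      (le_trans hclaimA (Finset.card_le_card (hfilter _)))
  · have hc2 : n - deg u ≤ (Finset.univ.filter fun w => G.degree w ≤ n - deg u - 1).card := by
      have he : n - 1 - deg u = n - deg u - 1 := by omega
      rw [← he]
      exact le_trans hclaimB (Finset.card_le_card (hfilter _))
    exact Chvatal.sorted_bound hmono σ (fun w => G.degree w) hσ (n - deg u - 1) (n - deg u) (by omega)
      (by omega) hc2
end

section
/- Let G be a graph of order n with degree sequence d_1 ≤ d_2 ≤ ... ≤ d_n. If G has no Hamiltonian path, then there exists an integer s with 1 ≤ s < (n+1)/2 such that d_s ≤ s-1 and d_{n-s+1} ≤ n-s-1. -/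
open SimpleGraph Finset

set_option linter.unusedSectionVars false

section ChvatalAux

open Function Set

variable {V : Type*} [Fintype V] [DecidableEq V]

/-- Number of neighbours, defined classically via `Set.ncard`. -/
noncomputable def ndeg (H : SimpleGraph V) (v : V) : ℕ := {w | H.Adj v w}.ncard

lemma ndeg_mono {H H' : SimpleGraph V} (h : H ≤ H') (v : V) : ndeg H v ≤ ndeg H' v :=
  Set.ncard_le_ncard (fun _ hw => h hw) (Set.toFinite _)

lemma ndeg_eq_degree (H : SimpleGraph V) [DecidableRel H.Adj] (v : V) :
    ndeg H v = H.degree v := by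
  classical
  rw [ndeg]
  have : {w | H.Adj v w} = ↑(H.neighborFinset v) := by
    ext w; simp [SimpleGraph.mem_neighborFinset]
  rw [this, Set.ncard_coe_finset, SimpleGraph.card_neighborFinset_eq_degree]

/-- A Hamiltonian path presented as a bijective sequence. -/
def PathSeq (H : SimpleGraph V) {m : ℕ} (f : Fin m → V) : Prop :=
  Function.Bijective f ∧ ∀ (i : ℕ) (hi : i + 1 < m),
    H.Adj (f ⟨i, Nat.lt_of_succ_lt hi⟩) (f ⟨i + 1, hi⟩)

/-- Cyclic successor on `Fin m`. -/
def fcyc {m : ℕ} (j : Fin m) : Fin m := ⟨(j.val + 1) % m, Nat.mod_lt _ j.pos⟩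

/-- A Hamiltonian cycle presented as a bijective sequence with cyclic adjacency. -/
def HamCyc (H : SimpleGraph V) : Prop :=
  ∃ (m : ℕ) (f : Fin m → V), Function.Bijective f ∧ ∀ j : Fin m, H.Adj (f j) (f (fcyc j))

lemma walk_of_chain {H : SimpleGraph V} :
    ∀ (l : List V) (a : V), List.Chain H.Adj a l →
      ∃ (b : V) (p : H.Walk a b), p.support = a :: l := by
  intro l
  induction l with
  | nil => exact fun a _ => ⟨a, SimpleGraph.Walk.nil, rfl⟩
  | cons c t ih =>
    intro a h
    replace h : H.Adj a c ∧ List.Chain H.Adj c t := List.isChain_cons_cons.mp h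
    obtain ⟨b, p, hp⟩ := ih c h.2
    exact ⟨b, SimpleGraph.Walk.cons h.1 p, by simp [hp]⟩

lemma pathSeq_hasHamPath {H : SimpleGraph V} {m : ℕ} (hm : 1 ≤ m) {f : Fin m → V}
    (h : PathSeq H f) : HasHamiltonianPath H := by
  classical
  have hchain : (List.ofFn f).Chain' H.Adj := List.isChain_ofFn.mpr h.2
  have hne : List.ofFn f ≠ [] := by
    simp only [ne_eq, List.ofFn_eq_nil_iff]; omega
  obtain ⟨x, t, hxt⟩ := List.exists_cons_of_ne_nil hne
  rw [hxt] at hchain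
  obtain ⟨b, p, hp⟩ := walk_of_chain t x hchain
  refine ⟨x, b, p, fun a => ?_⟩
  have hmem : a ∈ p.support := by
    rw [hp, ← hxt, List.mem_ofFn]
    exact h.1.2 a
  have hnd : p.support.Nodup := by
    rw [hp, ← hxt]
    exact List.nodup_ofFn.mpr h.1.1
  exact List.count_eq_one_of_mem hnd hmem

end ChvatalAux

section Rot
open Function Set
variable {V : Type*} [Fintype V] [DecidableEq V]

lemma myRotation {H : SimpleGraph V} {m : ℕ} (hm : 3 ≤ m) {f : Fin m → V}
    (hf : PathSeq H f)
    (hdeg : m ≤ ndeg H (f ⟨0, by omega⟩) + ndeg H (f ⟨m - 1, by omega⟩)) :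
    HamCyc H := by
  obtain ⟨hbij, hadj⟩ := hf
  set u := f ⟨0, by omega⟩ with hu
  set v := f ⟨m - 1, by omega⟩ with hv
  set A : Set (Fin m) := {i | i.val ≠ 0 ∧ H.Adj u (f i)} with hA
  set B : Set (Fin m) := {i | i.val ≠ 0 ∧
    H.Adj (f ⟨i.val - 1, Nat.lt_of_le_of_lt (Nat.sub_le _ _) i.isLt⟩) v} with hB
  have hAcard : A.ncard = ndeg H u := by
    have himg : {w | H.Adj u w} = f '' A := by
      ext w
      constructor
      · intro hw
        obtain ⟨i, rfl⟩ := hbij.2 w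
        refine ⟨i, ⟨?_, hw⟩, rfl⟩
        intro h0
        have hfi : f i = u := by rw [hu]; congr 1; exact Fin.ext h0
        rw [hfi] at hw
        exact H.irrefl hw
      · rintro ⟨i, ⟨_, hadj'⟩, rfl⟩; exact hadj'
    rw [ndeg, himg, Set.ncard_image_of_injective _ hbij.1]
  have hBcard : B.ncard = ndeg H v := by
    set φ : Fin m → V := fun i =>
      f ⟨i.val - 1, Nat.lt_of_le_of_lt (Nat.sub_le _ _) i.isLt⟩ with hφ
    have himg : {w | H.Adj v w} = φ '' B := by
      ext w
      constructor
      · intro hw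
        obtain ⟨j, rfl⟩ := hbij.2 w
        have hjne : j.val ≠ m - 1 := by
          intro hj
          have hfj : f j = v := by rw [hv]; congr 1; exact Fin.ext hj
          rw [hfj] at hw
          exact H.irrefl hw
        have hjlt : j.val + 1 < m := by have := j.isLt; omega
        exact ⟨⟨j.val + 1, hjlt⟩, ⟨by simp, hw.symm⟩, rfl⟩
      · rintro ⟨i, ⟨_, hadj'⟩, rfl⟩; exact hadj'.symm
    have hinj : Set.InjOn φ B := by
      intro a ha b hb hab
      have h1 : a.val - 1 = b.val - 1 := congrArg Fin.val (hbij.1 hab)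
      have ha0 : a.val ≠ 0 := ha.1
      have hb0 : b.val ≠ 0 := hb.1
      exact Fin.ext (by omega)
    rw [ndeg, himg, Set.ncard_image_of_injOn hinj]
  have hsub : A ∪ B ⊆ {i : Fin m | i.val ≠ 0} := by
    rintro i (hi | hi) <;> exact hi.1
  have hCcard : ({i : Fin m | i.val ≠ 0}).ncard = m - 1 := by
    have heq : {i : Fin m | i.val ≠ 0} = ({⟨0, by omega⟩} : Set (Fin m))ᶜ := by
      ext i
      simp [Fin.ext_iff]
    have h2 := Set.ncard_add_ncard_compl ({⟨0, by omega⟩} : Set (Fin m))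
    rw [Set.ncard_singleton, Nat.card_eq_fintype_card,
      Fintype.card_fin] at h2
    rw [heq]
    omega
  have hpig : (A ∩ B).Nonempty := by
    rw [← Set.ncard_pos (Set.toFinite _)]
    have h1 := Set.ncard_union_add_ncard_inter A B
    have h2 : (A ∪ B).ncard ≤ m - 1 := hCcard ▸ Set.ncard_le_ncard hsub (Set.toFinite _)
    omega
  obtain ⟨i, hiA, hiB⟩ := hpig
  have hk1 : 1 ≤ i.val := Nat.one_le_iff_ne_zero.mpr hiA.1
  have hk2 : i.val < m := i.isLt
  set g : Fin m → V := fun j =>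
    if h : j.val < i.val then f j
    else f ⟨m - 1 + i.val - j.val, by have := j.isLt; omega⟩ with hg
  have hginj : Function.Injective g := by
    intro a b hab
    have hal := a.isLt
    have hbl := b.isLt
    simp only [hg] at hab
    by_cases ha : a.val < i.val <;> by_cases hb : b.val < i.val
    · rw [dif_pos ha, dif_pos hb] at hab; exact hbij.1 hab
    · rw [dif_pos ha, dif_neg hb] at hab
      have h2 : a.val = m - 1 + i.val - b.val := congrArg Fin.val (hbij.1 hab)
      exact absurd h2 (by omega)
    · rw [dif_neg ha, dif_pos hb] at hab
      have h2 : m - 1 + i.val - a.val = b.val := congrArg Fin.val (hbij.1 hab)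
      exact absurd h2 (by omega)
    · rw [dif_neg ha, dif_neg hb] at hab
      have h2 : m - 1 + i.val - a.val = m - 1 + i.val - b.val :=
        congrArg Fin.val (hbij.1 hab)
      exact Fin.ext (by omega)
  have hgbij : Function.Bijective g :=
    (Fintype.bijective_iff_injective_and_card g).mpr
      ⟨hginj, Fintype.card_of_bijective hbij⟩
  refine ⟨m, g, hgbij, fun j => ?_⟩
  have hj := j.isLt
  by_cases hjm : j.val = m - 1
  · have hc : fcyc j = ⟨0, by omega⟩ := by
      apply Fin.ext
      show (j.val + 1) % m = 0
      rw [hjm]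
      have h9 : m - 1 + 1 = m := by omega
      rw [h9, Nat.mod_self]
    have hgj : g j = f i := by
      simp only [hg]
      rw [dif_neg (by omega)]
      congr 1
      exact Fin.ext (show m - 1 + i.val - j.val = i.val by omega)
    have hg0 : g ⟨0, by omega⟩ = u := by
      simp only [hg]
      exact dif_pos (show (0 : ℕ) < i.val by omega)
    rw [hc, hgj, hg0]
    exact hiA.2.symm
  · have hj1 : j.val + 1 < m := by omega
    have hc : fcyc j = ⟨j.val + 1, hj1⟩ := Fin.ext (Nat.mod_eq_of_lt hj1)
    rw [hc]
    by_cases h1 : j.val + 1 < i.val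
    · have hgj : g j = f j := by
        simp only [hg]; exact dif_pos (show j.val < i.val by omega)
      have hgj1 : g ⟨j.val + 1, hj1⟩ = f ⟨j.val + 1, hj1⟩ := by
        simp only [hg]; exact dif_pos (show j.val + 1 < i.val by omega)
      rw [hgj, hgj1]
      have h10 := hadj j.val hj1
      convert h10 using 2
    · by_cases h2 : j.val + 1 = i.val
      · have hgj : g j = f j := by
          simp only [hg]; exact dif_pos (show j.val < i.val by omega)
        have hgj1 : g ⟨j.val + 1, hj1⟩ = v := by
          simp only [hg]
          rw [dif_neg (show ¬ (j.val + 1 < i.val) by omega)]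
          rw [hv]
          congr 1
          exact Fin.ext (show m - 1 + i.val - (j.val + 1) = m - 1 by omega)
        rw [hgj, hgj1]
        have h4 := hiB.2
        have h5 : (⟨i.val - 1, Nat.lt_of_le_of_lt (Nat.sub_le _ _) i.isLt⟩ : Fin m)
            = j := Fin.ext (show i.val - 1 = j.val by omega)
        rw [h5] at h4
        exact h4
      · have h6 : i.val ≤ j.val := by omega
        have ht : m - 1 + i.val - (j.val + 1) + 1 < m := by omega
        have hgj : g j = f ⟨m - 1 + i.val - (j.val + 1) + 1, ht⟩ := by
          simp only [hg]
          rw [dif_neg (show ¬ (j.val < i.val) by omega)]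
          congr 1
          exact Fin.ext
            (show m - 1 + i.val - j.val = m - 1 + i.val - (j.val + 1) + 1 by omega)
        have hgj1 : g ⟨j.val + 1, hj1⟩ =
            f ⟨m - 1 + i.val - (j.val + 1), by omega⟩ := by
          simp only [hg]
          rw [dif_neg (show ¬ (j.val + 1 < i.val) by omega)]
        rw [hgj, hgj1]
        exact (hadj (m - 1 + i.val - (j.val + 1)) ht).symm
end Rot

section Ext
open Function Set
variable {V : Type*} [Fintype V] [DecidableEq V]

lemma myExtraction {H : SimpleGraph V} {u v : V} (hm : 3 ≤ Fintype.card V)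
    (hnc : ¬ HamCyc H) (hyc : HamCyc (H ⊔ SimpleGraph.edge u v)) :
    ∃ (m : ℕ) (_ : 3 ≤ m) (f : Fin m → V), PathSeq H f ∧
      ((f ⟨0, by omega⟩ = u ∧ f ⟨m - 1, by omega⟩ = v) ∨
       (f ⟨0, by omega⟩ = v ∧ f ⟨m - 1, by omega⟩ = u)) := by
  obtain ⟨m, g, hgbij, hgadj⟩ := hyc
  have hmcard : Fintype.card (Fin m) = Fintype.card V := Fintype.card_of_bijective hgbij
  rw [Fintype.card_fin] at hmcard
  have hm3 : 3 ≤ m := hmcard ▸ hm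
  by_cases hall : ∀ j : Fin m, H.Adj (g j) (g (fcyc j))
  · exact absurd ⟨m, g, hgbij, hall⟩ hnc
  push_neg at hall
  obtain ⟨j0, hj0⟩ := hall
  have hsup := hgadj j0
  rw [SimpleGraph.sup_adj] at hsup
  have hedge : (g j0 = u ∧ g (fcyc j0) = v) ∨ (g j0 = v ∧ g (fcyc j0) = u) := by
    rcases hsup with h | h
    · exact absurd h hj0
    · rw [SimpleGraph.edge_adj] at h
      tauto
  set f : Fin m → V :=
    fun j => g ⟨(j0.val + 1 + j.val) % m, Nat.mod_lt _ (by omega)⟩ with hfdef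
  have hfinj : Function.Injective f := by
    intro a b hab
    have h1 := hgbij.1 hab
    have h2 : (j0.val + 1 + a.val) % m = (j0.val + 1 + b.val) % m :=
      congrArg Fin.val h1
    have h3 : a.val ≡ b.val [MOD m] := Nat.ModEq.add_left_cancel' (j0.val + 1) h2
    have ha := a.isLt
    have hb := b.isLt
    exact Fin.ext (by rwa [Nat.ModEq, Nat.mod_eq_of_lt ha, Nat.mod_eq_of_lt hb] at h3)
  have hfbij : Function.Bijective f :=
    (Fintype.bijective_iff_injective_and_card f).mpr ⟨hfinj, by rw [Fintype.card_fin, hmcard]⟩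
  have hf0 : f ⟨0, by omega⟩ = g (fcyc j0) := by
    show g _ = g (fcyc j0)
    congr 1
  have hfm : f ⟨m - 1, by omega⟩ = g j0 := by
    show g _ = g j0
    congr 1
    apply Fin.ext
    show (j0.val + 1 + (m - 1)) % m = j0.val
    have h4 : j0.val + 1 + (m - 1) = j0.val + m := by omega
    rw [h4, Nat.add_mod_right, Nat.mod_eq_of_lt j0.isLt]
  have hstep : ∀ (i : ℕ) (hi : i + 1 < m),
      (H ⊔ SimpleGraph.edge u v).Adj (f ⟨i, Nat.lt_of_succ_lt hi⟩) (f ⟨i + 1, hi⟩) := by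
    intro i hi
    have h5 := hgadj ⟨(j0.val + 1 + i) % m, Nat.mod_lt _ (by omega)⟩
    have h6 : f ⟨i + 1, hi⟩ = g (fcyc ⟨(j0.val + 1 + i) % m, Nat.mod_lt _ (by omega)⟩) := by
      show g _ = g _
      congr 1
      apply Fin.ext
      show (j0.val + 1 + (i + 1)) % m = ((j0.val + 1 + i) % m + 1) % m
      rw [Nat.mod_add_mod]
      congr 1
    rw [h6]
    exact h5
  have hpadj : ∀ (i : ℕ) (hi : i + 1 < m),
      H.Adj (f ⟨i, Nat.lt_of_succ_lt hi⟩) (f ⟨i + 1, hi⟩) := by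
    intro i hi
    rcases hstep i hi with h | h
    · exact h
    · exfalso
      rw [SimpleGraph.edge_adj] at h
      obtain ⟨hcase, -⟩ := h
      have key : ∀ (a : ℕ) (ha : a < m) (x : V),
          (g j0 = x ∨ g (fcyc j0) = x) → f ⟨a, ha⟩ = x → a = m - 1 ∨ a = 0 := by
        intro a ha x hx hfa
        rcases hx with h' | h'
        · left
          have : f ⟨a, ha⟩ = f ⟨m - 1, by omega⟩ := by rw [hfa, hfm, h']
          have := congrArg Fin.val (hfinj this)
          simpa using this
        · right
          have : f ⟨a, ha⟩ = f ⟨0, by omega⟩ := by rw [hfa, hf0, h']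
          have := congrArg Fin.val (hfinj this)
          simpa using this
      have hu' : g j0 = u ∨ g (fcyc j0) = u := by tauto
      have hv' : g j0 = v ∨ g (fcyc j0) = v := by tauto
      have hne : u ≠ v := by
        rintro rfl
        apply hj0
        have h7 := hgadj j0
        rwa [SimpleGraph.edge_self_eq_bot, sup_bot_eq] at h7
      rcases hcase with ⟨ha, hb⟩ | ⟨ha, hb⟩
      · have r1 := key i (Nat.lt_of_succ_lt hi) u hu' ha
        have r2 := key (i + 1) hi v hv' hb
        omega
      · have r1 := key i (Nat.lt_of_succ_lt hi) v hv' ha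
        have r2 := key (i + 1) hi u hu' hb
        omega
  refine ⟨m, hm3, f, ⟨hfbij, hpadj⟩, ?_⟩
  rcases hedge with ⟨h1, h2⟩ | ⟨h1, h2⟩
  · right; rw [hf0, hfm]; exact ⟨h2, h1⟩
  · left; rw [hf0, hfm]; exact ⟨h2, h1⟩

lemma hamCyc_of_all_adj {H : SimpleGraph V} (hm : 3 ≤ Fintype.card V)
    (hall : ∀ a b : V, a ≠ b → H.Adj a b) : HamCyc H := by
  refine ⟨Fintype.card V, (Fintype.equivFin V).symm,
    (Fintype.equivFin V).symm.bijective, fun j => ?_⟩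
  apply hall
  intro hcontra
  have heq := (Fintype.equivFin V).symm.injective hcontra
  have h2 : j.val = (j.val + 1) % Fintype.card V := congrArg Fin.val heq
  have hj := j.isLt
  rcases Nat.lt_or_ge (j.val + 1) (Fintype.card V) with h | h
  · rw [Nat.mod_eq_of_lt h] at h2; omega
  · have h3 : j.val + 1 = Fintype.card V := by omega
    rw [h3, Nat.mod_self] at h2
    omega

noncomputable def nonEdges (H : SimpleGraph V) : Finset (V × V) :=
  letI := Classical.propDecidable
  Finset.univ.filter (fun p : V × V => p.1 ≠ p.2 ∧ ¬ H.Adj p.1 p.2)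

lemma mem_nonEdges {H : SimpleGraph V} {p : V × V} :
    p ∈ nonEdges H ↔ p.1 ≠ p.2 ∧ ¬ H.Adj p.1 p.2 := by
  classical
  rw [nonEdges]
  simp

lemma exists_maximal (k : ℕ) : ∀ (H : SimpleGraph V), (nonEdges H).card ≤ k →
    ¬ HamCyc H → ∃ H', H ≤ H' ∧ ¬ HamCyc H' ∧
      ∀ a b : V, a ≠ b → ¬ H'.Adj a b → HamCyc (H' ⊔ SimpleGraph.edge a b) := by
  induction k with
  | zero =>
    intro H hc hnc
    refine ⟨H, le_refl H, hnc, fun a b hab hnadj => ?_⟩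
    exfalso
    have : (a, b) ∈ nonEdges H := mem_nonEdges.mpr ⟨hab, hnadj⟩
    have := Finset.card_pos.mpr ⟨(a, b), this⟩
    omega
  | succ k ih =>
    intro H hc hnc
    by_cases hmax : ∀ a b : V, a ≠ b → ¬ H.Adj a b → HamCyc (H ⊔ SimpleGraph.edge a b)
    · exact ⟨H, le_refl H, hnc, hmax⟩
    · push_neg at hmax
      obtain ⟨a, b, hab, hnadj, hnh⟩ := hmax
      have hlt : (nonEdges (H ⊔ SimpleGraph.edge a b)).card < (nonEdges H).card := by
        apply Finset.card_lt_card
        constructor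
        · intro p hp
          rw [mem_nonEdges] at hp ⊢
          exact ⟨hp.1, fun h => hp.2 (Or.inl h)⟩
        · intro hsub
          have h1 : (a, b) ∈ nonEdges H := mem_nonEdges.mpr ⟨hab, hnadj⟩
          have h2 := hsub h1
          rw [mem_nonEdges] at h2
          refine h2.2 (Or.inr ?_)
          rw [SimpleGraph.edge_adj]
          exact ⟨Or.inl ⟨rfl, rfl⟩, hab⟩
      obtain ⟨H', h1, h2, h3⟩ := ih (H ⊔ SimpleGraph.edge a b) (by omega) hnh
      exact ⟨H', le_trans le_sup_left h1, h2, h3⟩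
end Ext

section Cone
open Function Set

def cone (n : ℕ) (G : SimpleGraph (Fin n)) : SimpleGraph (Fin (n + 1)) where
  Adj i j := i ≠ j ∧ (n ≤ i.val ∨ n ≤ j.val ∨
    ∃ (hi : i.val < n) (hj : j.val < n), G.Adj ⟨i.val, hi⟩ ⟨j.val, hj⟩)
  symm := by
    constructor
    rintro i j ⟨hne, h⟩
    refine ⟨hne.symm, ?_⟩
    rcases h with h | h | ⟨hi, hj, h⟩
    · right; left; exact h
    · left; exact h
    · right; right; exact ⟨hj, hi, h.symm⟩
  loopless := ⟨fun i h => h.1 rfl⟩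

lemma cone_le_ndeg {n : ℕ} (G : SimpleGraph (Fin n)) (w : Fin (n + 1)) (hw : w.val < n) :
    ndeg G ⟨w.val, hw⟩ + 1 ≤ ndeg (cone n G) w := by
  set e : Fin n → Fin (n + 1) := fun y => ⟨y.val, by omega⟩ with he
  have heinj : Function.Injective e := by
    intro a b hab
    have h := congrArg Fin.val hab
    exact Fin.ext h
  set S : Set (Fin (n + 1)) :=
    e '' {y | G.Adj ⟨w.val, hw⟩ y} ∪ {(⟨n, by omega⟩ : Fin (n + 1))} with hS
  have hsub : S ⊆ {x | (cone n G).Adj w x} := by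
    rintro x (⟨y, hy, rfl⟩ | hx)
    · refine ⟨?_, Or.inr (Or.inr ⟨hw, y.isLt, ?_⟩)⟩
      · intro hxy
        have : w.val = y.val := congrArg Fin.val hxy
        have hne := G.ne_of_adj hy
        rw [Fin.ne_iff_vne] at hne
        exact hne this
      · have hyy : (⟨(e y).val, y.isLt⟩ : Fin n) = y := Fin.ext rfl
        rw [hyy]
        exact hy
    · rw [Set.mem_singleton_iff] at hx
      subst hx
      exact ⟨by rw [Fin.ne_iff_vne]; simp; omega, Or.inr (Or.inl (le_refl n))⟩
  have hdisj : Disjoint (e '' {y | G.Adj ⟨w.val, hw⟩ y})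
      ({(⟨n, by omega⟩ : Fin (n + 1))} : Set (Fin (n + 1))) := by
    rw [Set.disjoint_singleton_right]
    rintro ⟨y, -, hy⟩
    have : y.val = n := congrArg Fin.val hy
    have := y.isLt
    omega
  have hcard : S.ncard = ndeg G ⟨w.val, hw⟩ + 1 := by
    rw [hS, Set.ncard_union_eq hdisj (Set.toFinite _) (Set.toFinite _),
      Set.ncard_image_of_injective _ heinj, Set.ncard_singleton]
    rfl
  rw [← hcard, ndeg]
  exact Set.ncard_le_ncard hsub (Set.toFinite _)

lemma cone_apex_ndeg {n : ℕ} (G : SimpleGraph (Fin n)) :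
    n ≤ ndeg (cone n G) ⟨n, by omega⟩ := by
  set e : Fin n → Fin (n + 1) := fun y => ⟨y.val, by omega⟩ with he
  have heinj : Function.Injective e := by
    intro a b hab
    have h := congrArg Fin.val hab
    exact Fin.ext h
  have hsub : e '' Set.univ ⊆ {x | (cone n G).Adj ⟨n, by omega⟩ x} := by
    rintro x ⟨y, -, rfl⟩
    refine ⟨?_, Or.inl (le_refl n)⟩
    rw [Fin.ne_iff_vne]
    have := y.isLt
    simp [he]
    omega
  have : (e '' Set.univ).ncard = n := by
    rw [Set.ncard_image_of_injective _ heinj, Set.ncard_univ, Nat.card_eq_fintype_card,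
      Fintype.card_fin]
  show n ≤ {x | (cone n G).Adj ⟨n, by omega⟩ x}.ncard
  calc n = (e '' Set.univ).ncard := this.symm
    _ ≤ _ := Set.ncard_le_ncard hsub (Set.toFinite _)

lemma hamCyc_cone {n : ℕ} (hn : 1 ≤ n) (G : SimpleGraph (Fin n)) :
    HamCyc (cone n G) → HasHamiltonianPath G := by
  rintro ⟨m, g, hbij, hadj⟩
  have hmcard : Fintype.card (Fin m) = Fintype.card (Fin (n + 1)) :=
    Fintype.card_of_bijective hbij
  rw [Fintype.card_fin, Fintype.card_fin] at hmcard
  subst hmcard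
  obtain ⟨j0, hj0⟩ := hbij.2 ⟨n, by omega⟩
  set q : Fin (n + 1) → Fin (n + 1) :=
    fun j => g ⟨(j0.val + j.val) % (n + 1), Nat.mod_lt _ (by omega)⟩ with hq
  have hqinj : Function.Injective q := by
    intro a b hab
    have h1 := hbij.1 hab
    have h2 : (j0.val + a.val) % (n + 1) = (j0.val + b.val) % (n + 1) :=
      congrArg Fin.val h1
    have h3 : a.val ≡ b.val [MOD n + 1] := Nat.ModEq.add_left_cancel' j0.val h2
    have ha := a.isLt
    have hb := b.isLt
    exact Fin.ext (by rwa [Nat.ModEq, Nat.mod_eq_of_lt ha, Nat.mod_eq_of_lt hb] at h3)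
  have hq0 : q ⟨0, by omega⟩ = ⟨n, by omega⟩ := by
    rw [hq]
    show g _ = _
    have : (⟨(j0.val + 0) % (n + 1), Nat.mod_lt _ (by omega)⟩ : Fin (n + 1)) = j0 := by
      apply Fin.ext
      show (j0.val + 0) % (n + 1) = j0.val
      rw [Nat.add_zero, Nat.mod_eq_of_lt j0.isLt]
    rw [this, hj0]
  have hqadj : ∀ (i : ℕ) (hi : i + 1 < n + 1),
      (cone n G).Adj (q ⟨i, Nat.lt_of_succ_lt hi⟩) (q ⟨i + 1, hi⟩) := by
    intro i hi
    have h5 := hadj ⟨(j0.val + i) % (n + 1), Nat.mod_lt _ (by omega)⟩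
    have h6 : q ⟨i + 1, hi⟩ = g (fcyc ⟨(j0.val + i) % (n + 1), Nat.mod_lt _ (by omega)⟩) := by
      rw [hq]
      show g _ = g _
      congr 1
      apply Fin.ext
      show (j0.val + (i + 1)) % (n + 1) = ((j0.val + i) % (n + 1) + 1) % (n + 1)
      rw [Nat.mod_add_mod]
      congr 1
    rw [h6]
    exact h5
  have hnonapex : ∀ i : ℕ, (hi : i < n) → (q ⟨i + 1, by omega⟩).val < n := by
    intro i hi
    have hne : q ⟨i + 1, by omega⟩ ≠ q ⟨0, by omega⟩ := by
      intro h
      have := congrArg Fin.val (hqinj h)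
      simpa using this
    rw [hq0] at hne
    rw [Fin.ne_iff_vne] at hne
    have := (q ⟨i + 1, by omega⟩).isLt
    simp at hne
    omega
  set p : Fin n → Fin n := fun i => ⟨(q ⟨i.val + 1, by omega⟩).val,
    hnonapex i.val i.isLt⟩ with hp
  have hpinj : Function.Injective p := by
    intro a b hab
    have h1 := congrArg Fin.val hab
    have h2 := hqinj (Fin.ext h1)
    have h3 := congrArg Fin.val h2
    simp at h3
    exact Fin.ext h3
  have hpbij : Function.Bijective p :=
    (Fintype.bijective_iff_injective_and_card p).mpr ⟨hpinj, rfl⟩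
  have hpadj : ∀ (i : ℕ) (hi : i + 1 < n),
      G.Adj (p ⟨i, Nat.lt_of_succ_lt hi⟩) (p ⟨i + 1, hi⟩) := by
    intro i hi
    have h5 := hqadj (i + 1) (by omega)
    obtain ⟨-, hcone⟩ := h5
    rcases hcone with h | h | ⟨h1', h2', h⟩
    · exact absurd h (by have := hnonapex i (by omega); omega)
    · exact absurd h (by have := hnonapex (i + 1) (by omega); omega)
    · convert h using 2 <;> exact Fin.ext rfl
  exact pathSeq_hasHamPath hn ⟨hpbij, hpadj⟩
end Cone

/-- Chvátal's theorem for paths: if `G` has no Hamiltonian path, there is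
`1 ≤ s < (n+1)/2` with `d_s ≤ s - 1` and `d_{n-s+1} ≤ n - s - 1`. -/
theorem stmt_5 (n : ℕ) (hn : 2 ≤ n) (G : SimpleGraph (Fin n)) [DecidableRel G.Adj]
    (d : Fin n → ℕ) (hmono : Monotone d)
    (hperm : ∃ σ : Fin n ≃ Fin n, ∀ i, d i = G.degree (σ i))
    (hG : ¬ HasHamiltonianPath G) :
    ∃ s : ℕ, ∃ h1 : 1 ≤ s, ∃ h2 : 2 * s < n + 1,
      d ⟨s - 1, by omega⟩ ≤ s - 1 ∧ d ⟨n - s, by omega⟩ ≤ n - s - 1 := by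
  by_contra hcon
  push_neg at hcon
  obtain ⟨σ, hσ⟩ := hperm
  have hdeg_eq : ∀ i : Fin n, ndeg G (σ i) = d i := by
    intro i; rw [hσ i, ndeg_eq_degree]
  -- counting form of the (negated) degree condition
  have hC : ∀ s : ℕ, 1 ≤ s → 2 * s < n + 1 →
      s ≤ {v : Fin n | ndeg G v ≤ s - 1}.ncard →
      s ≤ {v : Fin n | n - s ≤ ndeg G v}.ncard := by
    intro s h1 h2 hlow
    by_cases hA : d ⟨s - 1, by omega⟩ ≤ s - 1
    · have hB : n - s ≤ d ⟨n - s, by omega⟩ := by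
        have := hcon s h1 h2 hA
        omega
      set e2 : Fin s → Fin n := fun t => ⟨n - s + t.val, by have := t.isLt; omega⟩
        with he2
      have hinj2 : Function.Injective (fun t => σ (e2 t)) := by
        intro a b hab
        have h3 := congrArg Fin.val (σ.injective hab)
        simp only [he2] at h3
        have := a.isLt; have := b.isLt
        exact Fin.ext (by omega)
      have hsub2 : (fun t => σ (e2 t)) '' Set.univ ⊆
          {v : Fin n | n - s ≤ ndeg G v} := by
        rintro x ⟨t, -, rfl⟩
        show n - s ≤ ndeg G (σ (e2 t))
        rw [hdeg_eq]
        have hle' : (⟨n - s, by omega⟩ : Fin n) ≤ e2 t := by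
          rw [Fin.le_def]
          show n - s ≤ n - s + t.val
          omega
        exact le_trans hB (hmono hle')
      calc s = ((fun t => σ (e2 t)) '' Set.univ).ncard := by
            rw [Set.ncard_image_of_injective _ hinj2, Set.ncard_univ,
              Nat.card_eq_fintype_card, Fintype.card_fin]
        _ ≤ _ := Set.ncard_le_ncard hsub2 (Set.toFinite _)
    · exfalso
      push_neg at hA
      have hsub3 : {v : Fin n | ndeg G v ≤ s - 1} ⊆
          (fun t : Fin (s - 1) =>
            σ (⟨t.val, by have := t.isLt; omega⟩ : Fin n)) '' Set.univ := by
        intro x hx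
        obtain ⟨i, rfl⟩ := σ.surjective x
        have hdi : d i ≤ s - 1 := by rw [← hdeg_eq]; exact hx
        have hilt : i.val < s - 1 := by
          by_contra hge
          push_neg at hge
          have : d ⟨s - 1, by omega⟩ ≤ d i := hmono (by rw [Fin.le_def]; exact hge)
          omega
        exact ⟨⟨i.val, hilt⟩, Set.mem_univ _, rfl⟩
      have hcard3 : ((fun t : Fin (s - 1) =>
          σ (⟨t.val, by have := t.isLt; omega⟩ : Fin n)) '' Set.univ).ncard = s - 1 := by
        rw [Set.ncard_image_of_injective _ ?inj, Set.ncard_univ,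
          Nat.card_eq_fintype_card, Fintype.card_fin]
        case inj =>
          intro a b hab
          have h3 := congrArg Fin.val (σ.injective hab)
          exact Fin.ext h3
      have := Set.ncard_le_ncard hsub3 (Set.toFinite _)
      omega
  -- set up the cone and a maximal non-Hamiltonian supergraph
  have hnc0 : ¬ HamCyc (cone n G) := fun h => hG (hamCyc_cone (by omega) G h)
  obtain ⟨H, hle, hnc, hmax⟩ :=
    exists_maximal (nonEdges (cone n G)).card (cone n G) le_rfl hnc0
  have hcard3 : 3 ≤ Fintype.card (Fin (n + 1)) := by rw [Fintype.card_fin]; omega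
  -- a nonadjacent pair exists
  have hne_top : ¬ ∀ a b : Fin (n + 1), a ≠ b → H.Adj a b := fun hall =>
    hnc (hamCyc_of_all_adj hcard3 hall)
  push_neg at hne_top
  obtain ⟨a0, b0, hab0, hnadj0⟩ := hne_top
  have hne : (nonEdges H).Nonempty := ⟨(a0, b0), mem_nonEdges.mpr ⟨hab0, hnadj0⟩⟩
  obtain ⟨p0, hp0mem, hp0max⟩ :=
    Finset.exists_max_image (nonEdges H) (fun p => ndeg H p.1 + ndeg H p.2) hne
  rw [mem_nonEdges] at hp0mem
  have hexists : ∃ u v : Fin (n + 1), u ≠ v ∧ ¬ H.Adj u v ∧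
      ndeg H u ≤ ndeg H v ∧
      ∀ a b : Fin (n + 1), a ≠ b → ¬ H.Adj a b →
        ndeg H a + ndeg H b ≤ ndeg H u + ndeg H v := by
    rcases le_total (ndeg H p0.1) (ndeg H p0.2) with hor | hor
    · exact ⟨p0.1, p0.2, hp0mem.1, hp0mem.2, hor, fun a b hab hnadj =>
        hp0max (a, b) (mem_nonEdges.mpr ⟨hab, hnadj⟩)⟩
    · refine ⟨p0.2, p0.1, hp0mem.1.symm, fun h => hp0mem.2 h.symm, hor,
        fun a b hab hnadj => ?_⟩
      have h9 := hp0max (a, b) (mem_nonEdges.mpr ⟨hab, hnadj⟩)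
      dsimp only at h9
      omega
  obtain ⟨u, v, huv, hnuv, huv_le, hmaxsum⟩ := hexists
  set s := ndeg H u with hs
  have hapex : ∀ w : Fin (n + 1), n ≤ w.val → n ≤ ndeg H w := by
    intro w hw
    have h1 : n ≤ ndeg (cone n G) w := by
      have hwn : w = ⟨n, by omega⟩ := Fin.ext (show w.val = n by have := w.isLt; omega)
      rw [hwn]
      exact cone_apex_ndeg G
    exact le_trans h1 (ndeg_mono hle w)
  -- every vertex has positive degree in H
  have hndeg1 : ∀ w : Fin (n + 1), 1 ≤ ndeg H w := by
    intro w
    have h2 := ndeg_mono hle w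
    rcases Nat.lt_or_ge w.val n with hw | hw
    · have h1 := cone_le_ndeg G w hw
      omega
    · have h1 := hapex w hw
      omega
  have hs1 : 1 ≤ s := hndeg1 u
  -- degree-sum bound via rotation
  have hsum : ndeg H u + ndeg H v ≤ n := by
    by_contra hge
    push_neg at hge
    have hyc := hmax u v huv hnuv
    obtain ⟨m, hm3, f, hPS, hends⟩ := myExtraction hcard3 hnc hyc
    have hmcard : Fintype.card (Fin m) = Fintype.card (Fin (n + 1)) :=
      Fintype.card_of_bijective hPS.1
    rw [Fintype.card_fin, Fintype.card_fin] at hmcard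
    apply hnc
    apply myRotation hm3 hPS
    rcases hends with ⟨h1, h2⟩ | ⟨h1, h2⟩ <;> rw [h1, h2] <;> omega
  have hsn : s < n := by omega
  -- lower bound on the number of low-degree vertices of H
  have hslow : s ≤ {w : Fin (n + 1) | ndeg H w ≤ s}.ncard := by
    set N : Set (Fin (n + 1)) := {w | w ≠ v ∧ ¬ H.Adj v w} with hN
    have hNsub : N ⊆ {w | ndeg H w ≤ s} := by
      rintro w ⟨hw1, hw2⟩
      have := hmaxsum w v hw1 (fun h => hw2 h.symm)
      show ndeg H w ≤ s
      omega
    have hNc : Nᶜ ⊆ {v} ∪ {w | H.Adj v w} := by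
      intro w hw
      rw [hN] at hw
      simp only [Set.mem_compl_iff, Set.mem_setOf_eq, not_and, not_not] at hw
      by_cases hwv : w = v
      · exact Or.inl hwv
      · exact Or.inr (hw hwv)
    have hNccard : Nᶜ.ncard ≤ 1 + ndeg H v := by
      calc Nᶜ.ncard ≤ ({v} ∪ {w | H.Adj v w} : Set (Fin (n + 1))).ncard :=
            Set.ncard_le_ncard hNc (Set.toFinite _)
        _ ≤ 1 + ndeg H v := by
            have := Set.ncard_union_le ({v} : Set (Fin (n + 1))) {w | H.Adj v w}
            rw [Set.ncard_singleton] at this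
            exact this
    have htot := Set.ncard_add_ncard_compl N
    rw [Nat.card_eq_fintype_card, Fintype.card_fin] at htot
    have hNcard : n - ndeg H v ≤ N.ncard := by omega
    have := Set.ncard_le_ncard hNsub (Set.toFinite _)
    omega
  -- transfer to G
  have hGlow : s ≤ {v' : Fin n | ndeg G v' ≤ s - 1}.ncard := by
    set ψ : Fin (n + 1) → Fin n := fun w => ⟨min w.val (n - 1), by omega⟩ with hψ
    have hmaps : ∀ w ∈ {w : Fin (n + 1) | ndeg H w ≤ s},
        ψ w ∈ {v' : Fin n | ndeg G v' ≤ s - 1} := by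
      intro w hw
      have hwval : w.val < n := by
        by_contra hge
        push_neg at hge
        have h7 := hapex w hge
        have h8 : ndeg H w ≤ s := hw
        omega
      have h1 := cone_le_ndeg G w hwval
      have h2 := ndeg_mono hle w
      have hψw : ψ w = ⟨w.val, hwval⟩ := Fin.ext (by simp [hψ]; omega)
      rw [hψw]
      show ndeg G ⟨w.val, hwval⟩ ≤ s - 1
      have : ndeg H w ≤ s := hw
      omega
    have hinjOn : Set.InjOn ψ {w : Fin (n + 1) | ndeg H w ≤ s} := by
      intro w1 hw1 w2 hw2 heq
      have hv1 : w1.val < n := by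
        by_contra hge
        push_neg at hge
        have h7 := hapex w1 hge
        have h8 : ndeg H w1 ≤ s := hw1
        omega
      have hv2 : w2.val < n := by
        by_contra hge
        push_neg at hge
        have h7 := hapex w2 hge
        have h8 : ndeg H w2 ≤ s := hw2
        omega
      have h3 := congrArg Fin.val heq
      simp only [hψ] at h3
      exact Fin.ext (by omega)
    calc s ≤ {w : Fin (n + 1) | ndeg H w ≤ s}.ncard := hslow
      _ ≤ {v' : Fin n | ndeg G v' ≤ s - 1}.ncard :=
          Set.ncard_le_ncard_of_injOn ψ hmaps hinjOn (Set.toFinite _)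
  have hGhigh : s ≤ {v' : Fin n | n - s ≤ ndeg G v'}.ncard :=
    hC s hs1 (by omega) hGlow
  -- lift high-degree vertices to H
  have hShigh : s + 1 ≤ {w : Fin (n + 1) | n + 1 - s ≤ ndeg H w}.ncard := by
    set e : Fin n → Fin (n + 1) := fun y => ⟨y.val, by omega⟩ with he
    have heinj : Function.Injective e := by
      intro a b hab
      have h := congrArg Fin.val hab
      exact Fin.ext h
    have hsubH : e '' {v' : Fin n | n - s ≤ ndeg G v'} ∪ {(⟨n, by omega⟩ : Fin (n + 1))}
        ⊆ {w : Fin (n + 1) | n + 1 - s ≤ ndeg H w} := by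
      rintro x (⟨y, hy, rfl⟩ | hx)
      · have hyval : (e y).val < n := y.isLt
        have h1 := cone_le_ndeg G (e y) hyval
        have h2 := ndeg_mono hle (e y)
        have h3 : ndeg G ⟨(e y).val, hyval⟩ = ndeg G y := rfl
        have h4 : n - s ≤ ndeg G y := hy
        show n + 1 - s ≤ ndeg H (e y)
        omega
      · rw [Set.mem_singleton_iff] at hx
        subst hx
        have h7 := hapex ⟨n, by omega⟩ (le_refl n)
        show n + 1 - s ≤ ndeg H ⟨n, by omega⟩
        omega
    have hdisj : Disjoint (e '' {v' : Fin n | n - s ≤ ndeg G v'})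
        ({(⟨n, by omega⟩ : Fin (n + 1))} : Set (Fin (n + 1))) := by
      rw [Set.disjoint_singleton_right]
      rintro ⟨y, -, hy⟩
      have h1 : y.val = n := congrArg Fin.val hy
      have := y.isLt
      omega
    calc s + 1 ≤ {v' : Fin n | n - s ≤ ndeg G v'}.ncard + 1 := by omega
      _ = (e '' {v' : Fin n | n - s ≤ ndeg G v'} ∪
            {(⟨n, by omega⟩ : Fin (n + 1))}).ncard := by
          rw [Set.ncard_union_eq hdisj (Set.toFinite _) (Set.toFinite _),
            Set.ncard_image_of_injective _ heinj, Set.ncard_singleton]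
      _ ≤ _ := Set.ncard_le_ncard hsubH (Set.toFinite _)
  -- find a high-degree non-neighbour of u
  have hfinal : ∃ w : Fin (n + 1), (n + 1 - s ≤ ndeg H w) ∧ ¬ H.Adj u w := by
    by_contra hall
    push_neg at hall
    have hsub : {w : Fin (n + 1) | n + 1 - s ≤ ndeg H w} ⊆ {w | H.Adj u w} :=
      fun w hw => hall w hw
    have h1 := Set.ncard_le_ncard hsub (Set.toFinite _)
    have h2 : ({w : Fin (n + 1) | H.Adj u w}).ncard = s := rfl
    omega
  obtain ⟨w, hwdeg, hwnadj⟩ := hfinal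
  have hwne : u ≠ w := by
    intro h
    rw [← h] at hwdeg
    omega
  have := hmaxsum u w hwne hwnadj
  omega
end

section
/- Let k ≥ 1, n ≥ k³/2 + k + 4, and let G be a spanning subgraph of M_k(n) with minimum degree δ(G) ≥ k. If G ≠ M_k(n), then λ(G) < n - k - 1. -/
open SimpleGraph Finset

set_option maxHeartbeats 4000000

/-! ### Scalar inequalities -/

private lemma quad_div (c X : ℝ) (h3 : 3 ≤ c) (hcX : 0 ≤ c * X) : 0 ≤ X := by
  nlinarith [hcX, h3]

private lemma quad_aux (c A B κ : ℝ) (h3 : 3 ≤ c) (hκ : 0 ≤ κ) :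
    0 ≤ c*A^2 - 2*κ*A*B + (κ^2/3)*B^2 := by
  apply quad_div c _ h3
  nlinarith [sq_nonneg (c*A - κ*B), mul_nonneg (by linarith : (0:ℝ) ≤ c-3)
    (mul_nonneg (mul_nonneg hκ hκ) (sq_nonneg B))]

section ScalarLemmas
variable {k m : ℝ} (hk : 1 ≤ k) (hm : k^3/2 + 2 ≤ m)
include hk hm

private lemma aux_hk3 : 1 ≤ k^3 := by
  nlinarith [mul_nonneg (mul_nonneg (sub_nonneg.2 hk) (by linarith : (0:ℝ) ≤ k))
    (by linarith : (0:ℝ) ≤ k), sq_nonneg (k-1)]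

private lemma aux_hm0 : (0:ℝ) < m := by nlinarith [aux_hk3 hk hm]

private lemma aux_h2mk2 : k^5 + 4*k^2 ≤ 2*m*k^2 := by
  nlinarith [mul_nonneg (by linarith : (0:ℝ) ≤ 2*m - (k^3+4)) (sq_nonneg k)]

private lemma aux_hB1 (t v : ℝ) : 0 ≤ (2*m-k^3-2)*t^2 - 2*k^2*t*v + (k^4/2)*v^2 := by
  have hγ : (2:ℝ) ≤ 2*m-k^3-2 := by linarith
  nlinarith [sq_nonneg ((2*m-k^3-2)*t - k^2*v),
    mul_nonneg (by linarith : (0:ℝ) ≤ 2*m-k^3-2-2)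
      (mul_nonneg (pow_nonneg (by linarith : (0:ℝ) ≤ k) 4) (sq_nonneg v)), hγ]

private lemma aux_hB3 (v W : ℝ) (hW : 0 ≤ W) (hcs : v^2 ≤ k*W) :
    (k^4/2 + k^2/3 + k)*v^2 ≤ m*(m+2)*W := by
  have hk0' : (0:ℝ) < k := by linarith
  have h1 : (k^4/2 + k^2/3 + k)*v^2 ≤ (k^4/2 + k^2/3 + k)*(k*W) := by
    apply mul_le_mul_of_nonneg_left hcs; positivity
  have h2 : (k^4/2 + k^2/3 + k)*k ≤ m*(m+2) := by
    nlinarith [mul_nonneg (sub_nonneg.2 hm) (aux_hm0 hk hm).le,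
      mul_nonneg (pow_nonneg hk0'.le 4) (sq_nonneg (k-2)),
      mul_nonneg (pow_nonneg hk0'.le 3) (sq_nonneg (k-2)),
      mul_nonneg (sq_nonneg k) (sub_nonneg.2 hk),
      mul_nonneg (by linarith : (0:ℝ) ≤ 2*m - (k^3+4)) (pow_nonneg hk0'.le 3)]
  calc (k^4/2 + k^2/3 + k)*v^2 ≤ (k^4/2 + k^2/3 + k)*(k*W) := h1
    _ = ((k^4/2 + k^2/3 + k)*k)*W := by ring
    _ ≤ m*(m+2)*W := mul_le_mul_of_nonneg_right h2 hW

private lemma scalar00 (t za zb v W : ℝ) (hW : 0 ≤ W) (hcs : v^2 ≤ k*W) :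
    k*(k*t + v)^2 ≤ m*((m+2)*(W + za^2 + zb^2) + 2*((t+za)*(t+zb))) := by
  have hk0 : (0:ℝ) < k := by linarith
  have hk3 := aux_hk3 hk hm
  have hm0 := aux_hm0 hk hm
  have h2m : (0:ℝ) ≤ 2*m - (k^3+4) := by linarith
  have hγ : (2:ℝ) ≤ 2*m - k^3 - 2 := by linarith
  have hg5 : k^5 + 2*k^2 ≤ 2*(m^2 + 2*m - k^2) := by
    nlinarith [mul_nonneg h2m hm0.le, mul_nonneg h2m (pow_nonneg hk0.le 3),
      mul_nonneg (pow_nonneg hk0.le 4) (sq_nonneg (k-2)),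
      mul_nonneg (pow_nonneg hk0.le 3) (sq_nonneg (k-1)),
      mul_nonneg (sq_nonneg k) (sub_nonneg.2 hk)]
  have hmk2 : (0:ℝ) ≤ m^2 + 2*m - k^2 := by nlinarith [pow_nonneg hk0.le 5, sq_nonneg k]
  have hsc : k^5 + k^2*(2*m-k^3-2) ≤ (2*m-k^3-2)*(m^2+2*m) := by
    nlinarith [mul_nonneg (by linarith : (0:ℝ) ≤ (2*m-k^3-2) - 2) hmk2, sq_nonneg k]
  have hc4 : (0:ℝ) ≤ k^4 + k*(2*m-k^3-2) := by
    nlinarith [pow_nonneg hk0.le 4, mul_nonneg hk0.le (by linarith : (0:ℝ) ≤ 2*m-k^3-2)]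
  have hγB : 0 ≤ (2*m-k^3-2) * ((2*m-2-k^3)*t^2 - 2*k^2*t*v - k*v^2 + m*(m+2)*W) := by
    nlinarith [sq_nonneg ((2*m-k^3-2)*t - k^2*v), mul_nonneg hc4 (sub_nonneg.2 hcs),
      mul_nonneg (sub_nonneg.2 hsc) hW]
  have hB : 0 ≤ (2*m-2-k^3)*t^2 - 2*k^2*t*v - k*v^2 + m*(m+2)*W := by
    nlinarith [hγB, hγ]
  nlinarith [hB, sq_nonneg (t + (m/2)*(za+zb)), mul_nonneg hm0.le (sq_nonneg (za+zb)),
    mul_nonneg hm0.le (sq_nonneg (za-zb)),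
    mul_nonneg (mul_nonneg hm0.le hm0.le) (sq_nonneg (za-zb))]

private lemma scalar10 (t za zb v W : ℝ) (hW : 0 ≤ W) (hcs : v^2 ≤ k*W) :
    k*(k*t + v + za)^2 ≤ m*((m+2)*(W + za^2 + zb^2) + 2*((t+za)*(t+zb))) := by
  have hm0' := aux_hm0 hk hm
  have hk0' : (0:ℝ) < k := by linarith
  have h5 := aux_h2mk2 hk hm
  have hGzb : 0 ≤ (m^2+2*m)*zb^2 + 2*m*(t+za)*zb + (t+za)^2 := by
    nlinarith [mul_nonneg hm0'.le (sq_nonneg ((m+2)*zb + (t+za))), sq_nonneg (t+za), hm0']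
  have hca : (9:ℝ) ≤ m^2+2*m-k-1-(m-k^2-1)^2 := by
    nlinarith [h5, mul_nonneg (pow_nonneg hk0'.le 4) (sub_nonneg.2 hk),
      mul_nonneg (sq_nonneg k) (sub_nonneg.2 hk), sq_nonneg (k-1), hm]
  have hB2 := quad_aux (m^2+2*m-k-1-(m-k^2-1)^2) za v k (by linarith) hk0'.le
  nlinarith [hGzb, sq_nonneg (t + (m-k^2-1)*za), aux_hB1 hk hm t v, hB2,
    aux_hB3 hk hm v W hW hcs]

private lemma scalar11 (t za zb v W : ℝ) (hW : 0 ≤ W) (hcs : v^2 ≤ k*W) :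
    k*(k*t + v + za + zb)^2 ≤ m*((m+2)*(W + za^2 + zb^2) + 2*((t+za)*(t+zb))) := by
  have hm0' := aux_hm0 hk hm
  have hk0' : (0:ℝ) < k := by linarith
  have h5 := aux_h2mk2 hk hm
  have hcp : (3:ℝ) ≤ m*(m+3)/2 - k - (m-k^2)^2/2 := by
    nlinarith [h5, mul_nonneg (pow_nonneg hk0'.le 4) (sub_nonneg.2 hk),
      mul_nonneg (sq_nonneg k) (sub_nonneg.2 hk), sq_nonneg (k-1), hm]
  have hB2 := quad_aux (m*(m+3)/2 - k - (m-k^2)^2/2) (za+zb) v k hcp hk0'.le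
  nlinarith [mul_nonneg hm0'.le (sq_nonneg (za-zb)),
    mul_nonneg (mul_nonneg hm0'.le hm0'.le) (sq_nonneg (za-zb)),
    sq_nonneg (t + ((m-k^2)/2)*(za+zb)), aux_hB1 hk hm t v, hB2,
    aux_hB3 hk hm v W hW hcs]

end ScalarLemmas

/-! ### Counting -/

private lemma card_filter_Ico (n c d : ℕ) (hd : d ≤ n) :
    (univ.filter fun v : Fin n => c ≤ v.val ∧ v.val < d).card = d - c := by
  have h : ∀ m ∈ Finset.Ico c d, m < n := fun m hm => lt_of_lt_of_le (mem_Ico.1 hm).2 hd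
  rw [show (univ.filter fun v : Fin n => c ≤ v.val ∧ v.val < d) = (Finset.Ico c d).attachFin h by
    ext a; simp [Finset.mem_attachFin, Finset.mem_Ico]]
  rw [Finset.card_attachFin, Nat.card_Ico]

private lemma card_filter_le_val (n c : ℕ) : (univ.filter fun v : Fin n => c ≤ v.val).card = n - c := by
  have h : ∀ m ∈ Finset.Ico c n, m < n := fun m hm => (mem_Ico.1 hm).2
  rw [show (univ.filter fun v : Fin n => c ≤ v.val) = (Finset.Ico c n).attachFin h by
    ext a; simp [Finset.mem_attachFin, Finset.mem_Ico, a.isLt]]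
  rw [Finset.card_attachFin, Nat.card_Ico]

private lemma card_filter_not_le (n c : ℕ) (hc : c ≤ n) :
    (univ.filter fun v : Fin n => ¬ c ≤ v.val).card = c := by
  rw [show (univ.filter fun v : Fin n => ¬ c ≤ v.val)
      = (univ.filter fun v : Fin n => 0 ≤ v.val ∧ v.val < c) by
    ext a; simp only [Finset.mem_filter, Finset.mem_univ, true_and]; omega]
  rw [card_filter_Ico n 0 c hc]
  omega

private lemma mgraph_adj (k n : ℕ) (u x : Fin n) :
    (Mgraph k n).Adj u x ↔ (u ≠ x ∧ ((k ≤ u.val ∧ k ≤ x.val) ∨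
    (u.val < k ∧ k ≤ x.val ∧ x.val < 2 * k) ∨ (x.val < k ∧ k ≤ u.val ∧ u.val < 2 * k))) := Iff.rfl

/-! ### The quadratic form of `Mgraph` -/

private lemma sumM (k n : ℕ) (w : Fin n → ℝ) :
    ∑ u, ∑ x, ((Mgraph k n).adjMatrix ℝ) u x * (w u * w x)
      = (∑ u ∈ univ.filter fun v : Fin n => k ≤ v.val, w u)^2
        - (∑ u ∈ univ.filter fun v : Fin n => k ≤ v.val, (w u)^2)
        + 2*(∑ u ∈ univ.filter fun v : Fin n => k ≤ v.val ∧ v.val < 2*k, w u)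
           *(∑ u ∈ univ.filter fun v : Fin n => ¬ k ≤ v.val, w u) := by
  set WW := univ.filter fun v : Fin n => k ≤ v.val with hWW
  set SS := univ.filter fun v : Fin n => k ≤ v.val ∧ v.val < 2*k with hSS
  set IS := univ.filter fun v : Fin n => ¬ k ≤ v.val with hIS
  set T := ∑ u ∈ WW, w u with hT
  set i' := ∑ u ∈ IS, w u with hi'
  have hrw : ∀ u : Fin n, ∑ x, ((Mgraph k n).adjMatrix ℝ) u x * (w u * w x)
      = ∑ x ∈ univ.filter (fun x => (Mgraph k n).Adj u x), w u * w x := by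
    intro u
    rw [Finset.sum_filter]
    apply Finset.sum_congr rfl
    intro x _
    by_cases h : (Mgraph k n).Adj u x <;> simp [h]
  have claim1 : ∀ u : Fin n, ¬ k ≤ u.val →
      univ.filter (fun x => (Mgraph k n).Adj u x) = SS := by
    intro u hu
    ext x
    simp only [hSS, Finset.mem_filter, Finset.mem_univ, true_and, and_true, mgraph_adj, Ne,
      Fin.ext_iff]
    omega
  have claim2 : ∀ u : Fin n, k ≤ u.val → u.val < 2*k →
      univ.filter (fun x => (Mgraph k n).Adj u x) = univ.erase u := by
    intro u hu hu2
    ext x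
    simp only [Finset.mem_filter, Finset.mem_univ, true_and, and_true, mgraph_adj, Ne,
      Fin.ext_iff, Finset.mem_erase]
    omega
  have claim3 : ∀ u : Fin n, 2*k ≤ u.val →
      univ.filter (fun x => (Mgraph k n).Adj u x) = WW.erase u := by
    intro u hu
    ext x
    simp only [hWW, Finset.mem_filter, Finset.mem_univ, true_and, and_true, mgraph_adj, Ne,
      Fin.ext_iff, Finset.mem_erase]
    omega
  rw [← Finset.sum_filter_add_sum_filter_not univ (fun v : Fin n => k ≤ v.val)
    (fun u => ∑ x, ((Mgraph k n).adjMatrix ℝ) u x * (w u * w x))]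
  have hpart1 : ∑ u ∈ univ.filter (fun v : Fin n => ¬ k ≤ v.val),
      (∑ x, ((Mgraph k n).adjMatrix ℝ) u x * (w u * w x)) = i' * (∑ u ∈ SS, w u) := by
    rw [hi', Finset.sum_mul]
    apply Finset.sum_congr rfl
    intro u hu
    simp only [Finset.mem_filter] at hu
    rw [hrw u, claim1 u hu.2, Finset.mul_sum]
  have hpart2 : ∑ u ∈ univ.filter (fun v : Fin n => k ≤ v.val),
      (∑ x, ((Mgraph k n).adjMatrix ℝ) u x * (w u * w x))
      = T^2 - (∑ u ∈ WW, (w u)^2) + (∑ u ∈ SS, w u) * i' := by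
    have hsplit : ∀ u ∈ WW, (∑ x, ((Mgraph k n).adjMatrix ℝ) u x * (w u * w x))
        = (w u * T - (w u)^2) + (if u.val < 2*k then w u * i' else 0) := by
      intro u hu
      have humem : u ∈ WW := hu
      have hk_u : k ≤ u.val := (Finset.mem_filter.1 hu).2
      rw [hrw u]
      rcases lt_or_ge u.val (2*k) with h2 | h2
      · rw [claim2 u hk_u h2, if_pos h2]
        have hdecomp : (univ : Finset (Fin n)).erase u = (WW.erase u) ∪ IS := by
          ext x
          simp only [Finset.mem_erase, Finset.mem_univ, and_true, true_and, Finset.mem_union,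
            hWW, hIS, Finset.mem_filter, Ne, Fin.ext_iff]
          omega
        have hdisj : Disjoint (WW.erase u) IS := by
          rw [Finset.disjoint_left]
          intro x hx hx2
          have h1 : k ≤ x.val := (Finset.mem_filter.1 (Finset.mem_of_mem_erase hx)).2
          have h2 : ¬ k ≤ x.val := (Finset.mem_filter.1 hx2).2
          exact h2 h1
        rw [hdecomp, Finset.sum_union hdisj, ← Finset.mul_sum, ← Finset.mul_sum,
          Finset.sum_erase_eq_sub humem, ← hT, ← hi']
        ring
      · rw [claim3 u h2, if_neg (by omega), ← Finset.mul_sum,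
          Finset.sum_erase_eq_sub humem, ← hT]
        ring
    rw [Finset.sum_congr rfl hsplit, Finset.sum_add_distrib]
    have e1 : ∑ u ∈ WW, (w u * T - (w u)^2) = T^2 - ∑ u ∈ WW, (w u)^2 := by
      rw [Finset.sum_sub_distrib, ← Finset.sum_mul, ← hT, sq]
    have e2 : ∑ u ∈ WW, (if u.val < 2*k then w u * i' else 0) = (∑ u ∈ SS, w u) * i' := by
      rw [Finset.sum_ite, Finset.sum_const_zero, add_zero, ← Finset.sum_mul, hWW,
        Finset.filter_filter]
    rw [e1, e2]
  rw [hpart1, hpart2]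
  ring


private lemma cube_bound (k : ℝ) (hk : 1 ≤ k) : 2*k - 1 ≤ k^3 := by
  nlinarith [mul_nonneg (sub_nonneg.2 hk) (by nlinarith : (0:ℝ) ≤ k^2 + k - 1)]

private lemma cube_one (k : ℝ) (hk : 1 ≤ k) : 1 ≤ k^3 := by nlinarith [cube_bound k hk]

private lemma ams_bound (k m s i q : ℝ) (hk : 1 ≤ k) (hiq : i^2 ≤ k*q) :
    2*m*s*i ≤ m^2*q + k*s^2 := by
  nlinarith [sq_nonneg (m*i - k*s), mul_nonneg (sq_nonneg m) (sub_nonneg.2 hiq), hk]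

/-! ### Main Rayleigh quotient bound -/

private lemma main_quad (k n : ℕ) (hk : 1 ≤ k) (hn : (n : ℝ) ≥ (k : ℝ) ^ 3 / 2 + k + 4)
    (G : SimpleGraph (Fin n)) (inst : DecidableRel G.Adj)
    (hsub : G ≤ Mgraph k n) (a b : Fin n) (hka : k ≤ a.val) (hkb : k ≤ b.val)
    (hab : a ≠ b) (hnadj : ¬ G.Adj a b)
    (w : Fin n → ℝ) (hw : ∀ u, 0 ≤ w u) (hw1 : ∑ u, (w u)^2 = 1) :
    ∑ u, ∑ x, (@SimpleGraph.adjMatrix ℝ (Fin n) G inst _ _) u x * (w u * w x)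
      < (n : ℝ) - k - 1 := by
  have hk1 : (1:ℝ) ≤ (k:ℝ) := by exact_mod_cast hk
  have hk0 : (0:ℝ) < (k:ℝ) := by linarith
  have hk3' : (k:ℝ)^3 ≥ 2*(k:ℝ) - 1 := cube_bound (k:ℝ) hk1
  have hn2 : 2*k+2 ≤ n := by
    have : ((2*k+2 : ℕ) : ℝ) ≤ (n:ℝ) := by push_cast; linarith
    exact_mod_cast this
  have hkn : k ≤ n := by omega
  -- finsets
  set WW := univ.filter fun v : Fin n => k ≤ v.val with hWW
  set SS := univ.filter fun v : Fin n => k ≤ v.val ∧ v.val < 2*k with hSS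
  set IS := univ.filter fun v : Fin n => ¬ k ≤ v.val with hIS
  set T := ∑ u ∈ WW, w u with hT
  set Q := ∑ u ∈ WW, (w u)^2 with hQ
  set s := ∑ u ∈ SS, w u with hs
  set i' := ∑ u ∈ IS, w u with hi'
  set q := ∑ u ∈ IS, (w u)^2 with hq
  -- cardinalities
  have cardWW : (WW.card : ℝ) = (n:ℝ) - k := by
    rw [hWW, card_filter_le_val]
    push_cast [Nat.cast_sub hkn]
    ring
  have cardSS : (SS.card : ℝ) = (k:ℝ) := by
    rw [hSS, card_filter_Ico n k (2*k) (by omega)]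
    congr 1
    omega
  have cardIS : (IS.card : ℝ) = (k:ℝ) := by
    rw [hIS, card_filter_not_le n k hkn]
  -- reals
  set N : ℝ := (n:ℝ) - k with hN
  have hN0 : (0:ℝ) < N := by
    have h1 : (1:ℝ) ≤ (k:ℝ)^3 := cube_one (k:ℝ) hk1
    rw [hN]; linarith
  set m' : ℝ := (n:ℝ) - k - 2 with hm'
  have hm'h : (k:ℝ)^3/2 + 2 ≤ m' := by rw [hm']; linarith
  have hm'0 : (0:ℝ) < m' := aux_hm0 hk1 hm'h
  have hNm' : N = m' + 2 := by rw [hN, hm']; ring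
  set t : ℝ := T / N with ht
  set za : ℝ := w a - t with hza
  set zb : ℝ := w b - t with hzb
  have amem : a ∈ WW := by rw [hWW]; exact Finset.mem_filter.2 ⟨Finset.mem_univ a, hka⟩
  have bmem : b ∈ WW := by rw [hWW]; exact Finset.mem_filter.2 ⟨Finset.mem_univ b, hkb⟩
  have hSSsubWW : SS ⊆ WW := by
    rw [hSS, hWW]
    intro x hx
    rcases Finset.mem_filter.1 hx with ⟨h1, h2⟩
    exact Finset.mem_filter.2 ⟨h1, h2.1⟩
  -- the deviation sums
  set S2 := (SS.erase a).erase b with hS2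
  set W' : ℝ := ∑ u ∈ S2, (w u - t)^2 with hW'
  set v' : ℝ := ∑ u ∈ S2, (w u - t) with hv'
  have hW'0 : 0 ≤ W' := Finset.sum_nonneg fun u _ => sq_nonneg _
  have hcsW : v'^2 ≤ (k:ℝ) * W' := by
    have h1 : v'^2 ≤ (S2.card : ℝ) * W' := by
      rw [hv', hW']
      exact sq_sum_le_card_mul_sum_sq (s := S2) (f := fun u => w u - t)
    have h2 : (S2.card : ℝ) ≤ (k:ℝ) := by
      rw [← cardSS]
      have : S2.card ≤ SS.card :=
        Finset.card_le_card ((Finset.erase_subset _ _).trans (Finset.erase_subset _ _))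
      exact_mod_cast this
    exact h1.trans (mul_le_mul_of_nonneg_right h2 hW'0)
  set g2 : ℝ := ∑ u ∈ WW, (w u - t)^2 with hg2
  have hg2e : N * g2 = N * Q - T^2 := by
    have e1 : g2 = Q - 2*t*T + (WW.card : ℝ)*t^2 := by
      rw [hg2, hQ, hT]
      rw [Finset.sum_congr rfl (fun u _ => by ring :
        ∀ u ∈ WW, (w u - t)^2 = (w u)^2 - (2*t) * w u + t^2)]
      rw [Finset.sum_add_distrib, Finset.sum_sub_distrib, ← Finset.mul_sum,
        Finset.sum_const, nsmul_eq_mul]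
    rw [e1, cardWW, ht]
    field_simp
    ring
  have hg20 : 0 ≤ g2 := Finset.sum_nonneg fun u _ => sq_nonneg _
  -- budget
  have hbud : W' + za^2 + zb^2 ≤ g2 := by
    have hbS2 : b ∉ S2 := fun h => (Finset.notMem_erase b _) h
    have haS2 : a ∉ insert b S2 := by
      intro h
      rcases Finset.mem_insert.1 h with h | h
      · exact hab h
      · exact (Finset.notMem_erase a _) (Finset.mem_of_mem_erase h)
    have hsub2 : insert a (insert b S2) ⊆ WW := by
      intro x hx
      rcases Finset.mem_insert.1 hx with rfl | hx
      · exact amem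
      rcases Finset.mem_insert.1 hx with rfl | hx
      · exact bmem
      · exact hSSsubWW (Finset.mem_of_mem_erase (Finset.mem_of_mem_erase hx))
    calc W' + za^2 + zb^2 = ∑ u ∈ insert a (insert b S2), (w u - t)^2 := by
          rw [Finset.sum_insert haS2, Finset.sum_insert hbS2, ← hza, ← hzb, ← hW']
          ring
      _ ≤ g2 := Finset.sum_le_sum_of_subset_of_nonneg hsub2 (fun u _ _ => sq_nonneg _)
  -- decomposition of s
  have hsSS : ∑ u ∈ SS, (w u - t) = s - (k:ℝ)*t := by
    rw [Finset.sum_sub_distrib, Finset.sum_const, nsmul_eq_mul, cardSS, hs]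
  -- KEY inequality
  have KEY : (k:ℝ) * s^2 ≤ m' * ((m'+2) * g2 + 2 * (w a * w b)) := by
    have hwa : w a = t + za := by rw [hza]; ring
    have hwb : w b = t + zb := by rw [hzb]; ring
    have hmono : m' * ((m'+2) * (W' + za^2 + zb^2) + 2*((t+za)*(t+zb)))
        ≤ m' * ((m'+2) * g2 + 2 * (w a * w b)) := by
      rw [hwa, hwb]
      have h0 : (0:ℝ) ≤ m' * (m'+2) := mul_nonneg hm'0.le (by linarith)
      linarith [mul_nonneg h0 (sub_nonneg.2 hbud)]
    refine le_trans ?_ hmono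
    by_cases haSS : a ∈ SS <;> by_cases hbSS : b ∈ SS
    · -- both in SS
      have hbe : b ∈ SS.erase a := Finset.mem_erase.2 ⟨fun h => hab h.symm, hbSS⟩
      have e : s - (k:ℝ)*t = v' + za + zb := by
        rw [← hsSS, ← Finset.sum_erase_add SS _ haSS, ← Finset.sum_erase_add (SS.erase a) _ hbe,
          ← hS2, ← hv', ← hza, ← hzb]
        ring
      have e2 : s = (k:ℝ)*t + v' + za + zb := by linarith
      rw [e2]
      exact scalar11 hk1 hm'h t za zb v' W' hW'0 hcsW
    · -- a in SS only
      have hS2e : S2 = SS.erase a := by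
        rw [hS2]
        exact Finset.erase_eq_of_notMem (fun h => hbSS (Finset.mem_of_mem_erase h))
      have e : s - (k:ℝ)*t = v' + za := by
        rw [← hsSS, ← Finset.sum_erase_add SS _ haSS, hv', hS2e, hza]
      have e2 : s = (k:ℝ)*t + v' + za := by linarith
      rw [e2]
      exact scalar10 hk1 hm'h t za zb v' W' hW'0 hcsW
    · -- b in SS only
      have hS2e : S2 = SS.erase b := by
        rw [hS2, Finset.erase_eq_of_notMem haSS]
      have e : s - (k:ℝ)*t = v' + zb := by
        rw [← hsSS, ← Finset.sum_erase_add SS _ hbSS, hv', hS2e, hzb]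
      have e2 : s = (k:ℝ)*t + v' + zb := by linarith
      rw [e2]
      have h10 := scalar10 hk1 hm'h t zb za v' W' hW'0 hcsW
      linarith [h10]
    · -- neither
      have e : s - (k:ℝ)*t = v' := by
        have h1 : S2 = SS := by
          rw [hS2, Finset.erase_eq_of_notMem haSS, Finset.erase_eq_of_notMem hbSS]
        rw [h1] at hv'
        rw [← hsSS, hv']
      have e2 : s = (k:ℝ)*t + v' := by linarith
      rw [e2]
      exact scalar00 hk1 hm'h t za zb v' W' hW'0 hcsW
  have KEY2 : (k:ℝ) * s^2 ≤ m' * (N * Q - T^2) + 2 * m' * (w a * w b) := by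
    calc (k:ℝ) * s^2 ≤ m' * ((m'+2) * g2 + 2 * (w a * w b)) := KEY
      _ = m' * ((m'+2) * g2) + 2 * m' * (w a * w b) := by ring
      _ = m' * (N * Q - T^2) + 2 * m' * (w a * w b) := by rw [← hNm', hg2e]
  -- basic positivity
  have hs0 : 0 ≤ s := Finset.sum_nonneg fun u _ => hw u
  have hi0 : 0 ≤ i' := Finset.sum_nonneg fun u _ => hw u
  have hq0 : 0 ≤ q := Finset.sum_nonneg fun u _ => sq_nonneg _
  have hQ0 : 0 ≤ Q := Finset.sum_nonneg fun u _ => sq_nonneg _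
  have hQq : Q + q = 1 := by
    rw [hQ, hq, hWW, hIS]
    rw [Finset.sum_filter_add_sum_filter_not univ (fun v : Fin n => k ≤ v.val)
      (fun u => (w u)^2)]
    exact hw1
  have hiq : i'^2 ≤ (k:ℝ) * q := by
    have h1 : i'^2 ≤ (IS.card : ℝ) * q := by
      rw [hi', hq]
      exact sq_sum_le_card_mul_sum_sq (s := IS) (f := fun u => w u)
    rw [cardIS] at h1
    exact h1
  set m : ℝ := (n:ℝ) - k - 1 with hm
  have hm0 : 0 < m := by rw [hm]; linarith [hm'0]
  have h2msi : 2*m*s*i' ≤ m^2*q + (k:ℝ)*s^2 := ams_bound (k:ℝ) m s i' q hk1 hiq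
  -- bound the quadratic form of G by that of Mgraph minus the missing edge
  have hwab : 0 ≤ w a * w b := mul_nonneg (hw a) (hw b)
  have hMadj : (Mgraph k n).Adj a b := ⟨hab, Or.inl ⟨hka, hkb⟩⟩
  have hsumG : ∑ u, ∑ x, (@SimpleGraph.adjMatrix ℝ (Fin n) G inst _ _) u x * (w u * w x)
      ≤ T^2 - Q + 2*s*i' - 2*(w a * w b) := by
    have hsM : ∑ u, ∑ x, ((Mgraph k n).adjMatrix ℝ) u x * (w u * w x)
        = T^2 - Q + 2*s*i' := sumM k n w
    set F : Fin n × Fin n → ℝ :=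
      fun p => (@SimpleGraph.adjMatrix ℝ (Fin n) G inst _ _) p.1 p.2 * (w p.1 * w p.2) with hF
    set FM : Fin n × Fin n → ℝ :=
      fun p => ((Mgraph k n).adjMatrix ℝ) p.1 p.2 * (w p.1 * w p.2) with hFM
    have hpt : ∀ p : Fin n × Fin n, F p ≤ FM p := by
      intro p
      rw [hF, hFM]
      simp only [SimpleGraph.adjMatrix_apply]
      by_cases h : G.Adj p.1 p.2
      · rw [if_pos h, if_pos (hsub h)]
      · rw [if_neg h]
        by_cases h2 : (Mgraph k n).Adj p.1 p.2
        · rw [if_pos h2]; simp [mul_nonneg (hw p.1) (hw p.2)]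
        · rw [if_neg h2]
    have hFab : F (a, b) = 0 := by
      rw [hF]; simp [SimpleGraph.adjMatrix_apply, hnadj]
    have hFba : F (b, a) = 0 := by
      rw [hF]; simp only [SimpleGraph.adjMatrix_apply]
      rw [if_neg (fun h => hnadj h.symm)]; ring
    have hFMab : FM (a, b) = w a * w b := by
      rw [hFM]; simp [SimpleGraph.adjMatrix_apply, hMadj]
    have hFMba : FM (b, a) = w a * w b := by
      rw [hFM]; simp only [SimpleGraph.adjMatrix_apply]
      rw [if_pos hMadj.symm]; ring
    have hne2 : ((b, a) : Fin n × Fin n) ≠ (a, b) := by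
      intro h
      exact hab (congrArg Prod.fst h).symm
    have hmem1 : ((a, b) : Fin n × Fin n) ∈ (univ : Finset (Fin n × Fin n)) := Finset.mem_univ _
    have hmem2 : ((b, a) : Fin n × Fin n) ∈ (univ : Finset (Fin n × Fin n)).erase (a, b) :=
      Finset.mem_erase.2 ⟨hne2, Finset.mem_univ _⟩
    have hFsum : ∑ u, ∑ x, (@SimpleGraph.adjMatrix ℝ (Fin n) G inst _ _) u x * (w u * w x)
        = ∑ p : Fin n × Fin n, F p := by
      rw [← Finset.univ_product_univ, Finset.sum_product]
    have hFMsum : ∑ u, ∑ x, ((Mgraph k n).adjMatrix ℝ) u x * (w u * w x)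
        = ∑ p : Fin n × Fin n, FM p := by
      rw [← Finset.univ_product_univ, Finset.sum_product]
    rw [hFsum, ← hsM, hFMsum]
    have e1 : ∑ p : Fin n × Fin n, F p
        = ∑ p ∈ ((univ : Finset (Fin n × Fin n)).erase (a,b)).erase (b,a), F p := by
      rw [Finset.sum_erase_eq_sub hmem2, Finset.sum_erase_eq_sub hmem1, hFab, hFba]
      ring
    have e2 : ∑ p ∈ ((univ : Finset (Fin n × Fin n)).erase (a,b)).erase (b,a), FM p
        = (∑ p : Fin n × Fin n, FM p) - 2*(w a * w b) := by
      rw [Finset.sum_erase_eq_sub hmem2, Finset.sum_erase_eq_sub hmem1, hFMab, hFMba]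
      ring
    rw [e1, ← e2]
    exact Finset.sum_le_sum (fun p _ => hpt p)
  -- conclusion
  have hE0 : 0 ≤ N * Q - T^2 := by rw [← hg2e]; exact mul_nonneg hN0.le hg20
  by_cases hpos : 0 < (N * Q - T^2) + 2 * (w a * w b)
  · have hmm' : m' = m - 1 := by rw [hm', hm]; ring
    have hNm : N = m + 1 := by rw [hN, hm]; ring
    have hchain : m * (T^2 - Q + 2*s*i' - 2*(w a * w b)) < m * m := by
      have step1 : m * (T^2 - Q + 2*s*i' - 2*(w a * w b))
          ≤ m * (T^2 - Q) + m^2*q + (k:ℝ)*s^2 - 2*m*(w a * w b) := by linarith [h2msi]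
      have step2 : m * (T^2 - Q) + m^2*q + (k:ℝ)*s^2 - 2*m*(w a * w b)
          ≤ m * (T^2 - Q) + m^2*q + m' * (N * Q - T^2) + 2 * m' * (w a * w b)
            - 2*m*(w a * w b) := by linarith [KEY2]
      have step3 : m * (T^2 - Q) + m^2*q + m' * (N * Q - T^2) + 2 * m' * (w a * w b)
            - 2*m*(w a * w b) = m^2 * (Q + q) - ((N * Q - T^2) + 2 * (w a * w b)) := by
        rw [hmm', hNm]; ring
      rw [hQq] at step3
      calc m * (T^2 - Q + 2*s*i' - 2*(w a * w b))
          ≤ m^2 * 1 - ((N * Q - T^2) + 2 * (w a * w b)) := by linarith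
        _ < m^2 * 1 := by linarith
        _ = m * m := by ring
    have := lt_of_mul_lt_mul_left hchain hm0.le
    have hfin : T^2 - Q + 2*s*i' - 2*(w a * w b) < m := this
    exact lt_of_le_of_lt hsumG hfin
  · push_neg at hpos
    have hEzero : N * Q - T^2 = 0 := le_antisymm (by linarith) hE0
    have hwab0 : w a * w b = 0 := le_antisymm (by linarith) hwab
    have hg2z : g2 = 0 := by
      have := hg2e
      rw [hEzero] at this
      exact (mul_eq_zero.1 (this)).resolve_left (ne_of_gt hN0)
    have hallt : ∀ u ∈ WW, w u = t := by
      intro u hu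
      have := (Finset.sum_eq_zero_iff_of_nonneg (fun u _ => sq_nonneg (w u - t))).1 hg2z u hu
      have h2 : w u - t = 0 := by
        exact pow_eq_zero_iff (n := 2) (by norm_num) |>.1 this
      linarith
    have hta : w a = t := hallt a amem
    have htb : w b = t := hallt b bmem
    have ht0 : t = 0 := by
      have h : t * t = 0 := by
        rw [show t*t = w a * w b by rw [hta, htb]]; exact hwab0
      exact mul_self_eq_zero.1 h
    have hTz : T = 0 := by
      rw [hT]
      apply Finset.sum_eq_zero
      intro u hu
      rw [hallt u hu, ht0]
    have hQz : Q = 0 := by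
      rw [hQ]
      apply Finset.sum_eq_zero
      intro u hu
      rw [hallt u hu, ht0]
      norm_num
    have hsz : s = 0 := by
      rw [hs]
      apply Finset.sum_eq_zero
      intro u hu
      rw [hallt u (hSSsubWW hu), ht0]
    calc ∑ u, ∑ x, (@SimpleGraph.adjMatrix ℝ (Fin n) G inst _ _) u x * (w u * w x)
        ≤ T^2 - Q + 2*s*i' - 2*(w a * w b) := hsumG
      _ = 0 := by rw [hTz, hQz, hsz, hwab0]; ring
      _ < (n:ℝ) - k - 1 := by rw [← hm]; exact hm0

/-- A proper spanning subgraph of `M_k(n)` with minimum degree at least `k`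
has spectral radius less than `n - k - 1`. -/
theorem stmt_9 (k n : ℕ) (hk : 1 ≤ k) (hn : (n : ℝ) ≥ (k : ℝ) ^ 3 / 2 + k + 4)
    (G : SimpleGraph (Fin n)) [DecidableRel G.Adj]
    (hsub : G ≤ Mgraph k n) (hδ : k ≤ G.minDegree) (hne : G ≠ Mgraph k n) :
    specRad G < (n : ℝ) - k - 1 := by
  have hk1 : (1:ℝ) ≤ (k:ℝ) := by exact_mod_cast hk
  have hk3' : (k:ℝ)^3 ≥ 2*(k:ℝ) - 1 := cube_bound (k:ℝ) hk1
  have hn2 : 2*k+2 ≤ n := by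
    have : ((2*k+2 : ℕ) : ℝ) ≤ (n:ℝ) := by push_cast; linarith
    exact_mod_cast this
  have hn0 : 0 < n := by omega
  have hnonempty : Nonempty (Fin n) := ⟨⟨0, hn0⟩⟩
  -- cardinality of the middle set
  have cardSS : (univ.filter fun v : Fin n => k ≤ v.val ∧ v.val < 2*k).card = k := by
    rw [card_filter_Ico n k (2*k) (by omega)]; omega
  -- extract a missing edge
  obtain ⟨a, b, hM, hG⟩ : ∃ a b, (Mgraph k n).Adj a b ∧ ¬ G.Adj a b := by
    by_contra h
    push_neg at h
    exact hne (le_antisymm hsub (fun {x y} hxy => h x y hxy))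
  have hab : a ≠ b := hM.ne
  -- a vertex below k with a missing incident edge would have degree < k
  have hgen : ∀ x y : Fin n, (Mgraph k n).Adj x y → ¬ G.Adj x y → k ≤ x.val := by
    intro x y hMxy hGxy
    by_contra hlt
    push_neg at hlt
    have hySS : k ≤ y.val ∧ y.val < 2*k := by
      rcases hMxy.2 with h | h | h <;> omega
    have hymem : y ∈ univ.filter fun v : Fin n => k ≤ v.val ∧ v.val < 2*k :=
      Finset.mem_filter.2 ⟨Finset.mem_univ y, hySS⟩
    have hsubnb : G.neighborFinset x ⊆
        (univ.filter fun v : Fin n => k ≤ v.val ∧ v.val < 2*k).erase y := by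
      intro z hz
      rw [SimpleGraph.mem_neighborFinset] at hz
      have hMz := hsub hz
      refine Finset.mem_erase.2 ⟨fun hzy => hGxy (hzy ▸ hz), ?_⟩
      refine Finset.mem_filter.2 ⟨Finset.mem_univ z, ?_⟩
      rcases hMz.2 with h | h | h <;> omega
    have hdeg : G.degree x ≤ k - 1 := by
      calc G.degree x = (G.neighborFinset x).card := rfl
        _ ≤ ((univ.filter fun v : Fin n => k ≤ v.val ∧ v.val < 2*k).erase y).card :=
            Finset.card_le_card hsubnb
        _ = k - 1 := by rw [Finset.card_erase_of_mem hymem, cardSS]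
    have := G.minDegree_le_degree x
    omega
  have hka : k ≤ a.val := hgen a b hM hG
  have hkb : k ≤ b.val := hgen b a hM.symm (fun h => hG h.symm)
  -- spectral part
  suffices H : ∀ (hA : Matrix.IsHermitian
      (@SimpleGraph.adjMatrix ℝ (Fin n) G (Classical.decRel G.Adj) _ _)),
      (⨆ i, hA.eigenvalues i) < (n : ℝ) - k - 1 by
    unfold specRad
    exact H _
  intro hA
  obtain ⟨i0, hi0⟩ := Finite.exists_max (fun i => hA.eigenvalues i)
  refine lt_of_le_of_lt (ciSup_le hi0) ?_
  set A := @SimpleGraph.adjMatrix ℝ (Fin n) G (Classical.decRel G.Adj) _ _ with hAdef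
  set v : EuclideanSpace ℝ (Fin n) := hA.eigenvectorBasis i0 with hv
  have hvnorm : ∑ u, (v u)^2 = 1 := by
    have h1 : ‖hA.eigenvectorBasis i0‖ = 1 := hA.eigenvectorBasis.orthonormal.1 i0
    rw [EuclideanSpace.norm_eq] at h1
    have h2 := Real.sqrt_eq_one.1 h1
    simpa [Real.norm_eq_abs, sq_abs] using h2
  have heig := hA.mulVec_eigenvectorBasis i0
  have hp : ∀ u, (∑ x, A u x * v x) = hA.eigenvalues i0 * v u := by
    intro u
    have h := congrFun heig u
    simpa [Matrix.mulVec, dotProduct, hAdef] using h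
  have hray : hA.eigenvalues i0 = ∑ u, ∑ x, A u x * (v u * v x) := by
    have e1 : ∀ u, ∑ x, A u x * (v u * v x) = v u * (∑ x, A u x * v x) := by
      intro u
      rw [Finset.mul_sum]
      exact Finset.sum_congr rfl fun x _ => by ring
    calc hA.eigenvalues i0 = hA.eigenvalues i0 * ∑ u, (v u)^2 := by rw [hvnorm, mul_one]
      _ = ∑ u, hA.eigenvalues i0 * (v u)^2 := by rw [Finset.mul_sum]
      _ = ∑ u, ∑ x, A u x * (v u * v x) := by
          apply Finset.sum_congr rfl
          intro u _
          rw [e1 u, hp u]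
          ring
  have habs : ∑ u, ∑ x, A u x * (v u * v x) ≤ ∑ u, ∑ x, A u x * (|v u| * |v x|) := by
    apply Finset.sum_le_sum
    intro u _
    apply Finset.sum_le_sum
    intro x _
    have hnn : (0:ℝ) ≤ A u x := by
      rw [hAdef]
      simp only [SimpleGraph.adjMatrix_apply]
      by_cases h : G.Adj u x <;> simp [h]
    have : v u * v x ≤ |v u| * |v x| := by
      rw [← abs_mul]
      exact le_abs_self _
    exact mul_le_mul_of_nonneg_left this hnn
  have hmq := main_quad k n hk hn G (Classical.decRel G.Adj) hsub a b hka hkb hab hG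
    (fun u => |v u|) (fun u => abs_nonneg _) (by simp only [sq_abs]; exact hvnorm)
  calc hA.eigenvalues i0 = ∑ u, ∑ x, A u x * (v u * v x) := hray
    _ ≤ ∑ u, ∑ x, A u x * (|v u| * |v x|) := habs
    _ < (n : ℝ) - k - 1 := hmq
end

section
/- Let k ≥ 1, n ≥ k³/2 + k²/2 + k + 5, and let G be a spanning subgraph of K_{n-k-1} + K_{k+1} with minimum degree δ(G) ≥ k. If G ≠ K_{n-k-1} + K_{k+1}, then λ(G) < n - k - 2. -/
open SimpleGraph Finset
open Matrix

section Aux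

lemma aux_card_filter_lt (a n : ℕ) :
    ((Finset.univ : Finset (Fin n)).filter fun x => x.val < a).card ≤ a := by
  classical
  calc ((Finset.univ : Finset (Fin n)).filter fun x => x.val < a).card
      ≤ (Finset.range a).card := by
        apply Finset.card_le_card_of_injOn (fun x => x.val)
        · intro x hx; simp at hx ⊢; exact hx
        · intro x _ y _ h; exact Fin.ext h
    _ = a := Finset.card_range a

lemma aux_card_filter_le (a n : ℕ) :
    ((Finset.univ : Finset (Fin n)).filter fun x => a ≤ x.val).card ≤ n - a := by
  classical
  calc ((Finset.univ : Finset (Fin n)).filter fun x => a ≤ x.val).card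
      ≤ (Finset.range (n - a)).card := by
        apply Finset.card_le_card_of_injOn (fun x => x.val - a)
        · intro x hx; simp at hx ⊢; omega
        · intro x hx y hy h
          simp at hx hy h
          exact Fin.ext (by omega)
    _ = n - a := Finset.card_range _

/-- Any eigenvalue squared is bounded by the max "abs-row-sum of A²". -/
lemma aux_eig_sq_le {n : ℕ} (hn : 0 < n) (A : Matrix (Fin n) (Fin n) ℝ)
    (hA : A.IsHermitian) (C : ℝ)
    (hC : ∀ j, (∑ l, |A j l| * (∑ m, |A l m|)) ≤ C) (i : Fin n) :
    hA.eigenvalues i ≤ Real.sqrt C := by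
  haveI : Nonempty (Fin n) := Fin.pos_iff_nonempty.mp hn
  set μ := hA.eigenvalues i with hμ
  set v : Fin n → ℝ := ⇑(hA.eigenvectorBasis i) with hvdef
  have hv : A *ᵥ v = μ • v := hA.mulVec_eigenvectorBasis i
  have hv2 : A *ᵥ (A *ᵥ v) = (μ ^ 2) • v := by
    rw [hv, Matrix.mulVec_smul, hv, smul_smul, ← sq]
  obtain ⟨j, -, hj⟩ := Finset.exists_max_image Finset.univ (fun b => |v b|)
    ⟨Classical.arbitrary _, Finset.mem_univ _⟩
  have hj' : ∀ b, |v b| ≤ |v j| := fun b => hj b (Finset.mem_univ b)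
  have hjpos : 0 < |v j| := by
    rcases lt_or_eq_of_le (abs_nonneg (v j)) with h | h
    · exact h
    · exfalso
      have hz : v = 0 := by
        funext b
        have := hj' b
        rw [← h] at this
        simpa using le_antisymm this (abs_nonneg _)
      have h1 : ‖hA.eigenvectorBasis i‖ = 1 := hA.eigenvectorBasis.orthonormal.1 i
      have h0 : hA.eigenvectorBasis i = 0 := by
        ext b
        have := congrFun hz b
        simpa using this
      rw [h0, norm_zero] at h1
      norm_num at h1
  have key : μ ^ 2 * |v j| ≤ C * |v j| := by
    have h1 : μ ^ 2 * |v j| = |(A *ᵥ (A *ᵥ v)) j| := by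
      rw [hv2]
      simp only [Pi.smul_apply, smul_eq_mul, abs_mul, abs_pow, sq_abs]
    rw [h1]
    have h2 : (A *ᵥ (A *ᵥ v)) j = ∑ l, A j l * ∑ m, A l m * v m := by
      simp [Matrix.mulVec, dotProduct]
    rw [h2]
    calc |∑ l, A j l * ∑ m, A l m * v m|
        ≤ ∑ l, |A j l * ∑ m, A l m * v m| := Finset.abs_sum_le_sum_abs _ _
      _ ≤ ∑ l, |A j l| * (∑ m, |A l m| * |v j|) := by
          apply Finset.sum_le_sum
          intro l _
          rw [abs_mul]
          apply mul_le_mul_of_nonneg_left _ (abs_nonneg _)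
          calc |∑ m, A l m * v m| ≤ ∑ m, |A l m * v m| := Finset.abs_sum_le_sum_abs _ _
            _ ≤ ∑ m, |A l m| * |v j| := by
                apply Finset.sum_le_sum
                intro m _
                rw [abs_mul]
                exact mul_le_mul_of_nonneg_left (hj' m) (abs_nonneg _)
      _ = (∑ l, |A j l| * ∑ m, |A l m|) * |v j| := by
          rw [Finset.sum_mul]
          apply Finset.sum_congr rfl
          intro l _
          rw [← Finset.sum_mul, mul_assoc]
      _ ≤ C * |v j| := mul_le_mul_of_nonneg_right (hC j) (abs_nonneg _)
  have hsq : μ ^ 2 ≤ C := le_of_mul_le_mul_right key hjpos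
  calc μ ≤ |μ| := le_abs_self μ
    _ = Real.sqrt (μ^2) := (Real.sqrt_sq_eq_abs μ).symm
    _ ≤ Real.sqrt C := Real.sqrt_le_sqrt hsq

end Aux

lemma aux_sum_deg_bound (k n : ℕ) (hk : 1 ≤ k) (hn2 : 2*k+5 ≤ n)
    (G : SimpleGraph (Fin n)) [DecidableRel G.Adj]
    (hsub : G ≤ DUgraph (n-k-1) n) (hδ : k ≤ G.minDegree)
    (hne : G ≠ DUgraph (n-k-1) n) (j : Fin n) :
    (∑ m ∈ G.neighborFinset j, (G.degree m : ℝ)) ≤ ((n:ℝ)-k-2)^2 - 2 := by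
  classical
  haveI : Nonempty (Fin n) := Fin.pos_iff_nonempty.mp (by omega)
  set N := n - k - 1 with hN
  have hNcast : (N : ℝ) = (n:ℝ) - k - 1 := by
    have h1 : N + (k+1) = n := by omega
    have h2 : ((N:ℝ) + ((k:ℝ)+1)) = (n:ℝ) := by exact_mod_cast congrArg (Nat.cast : ℕ → ℝ) h1
    linarith
  set D : ℝ := (n:ℝ) - k - 2 with hD
  have hDk : (k:ℝ) + 3 ≤ D := by
    have : ((2*k+5 : ℕ) : ℝ) ≤ (n : ℝ) := by exact_mod_cast hn2
    push_cast at this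
    simp only [hD]; linarith
  have hk1 : (1:ℝ) ≤ (k:ℝ) := by exact_mod_cast hk
  -- adjacency structure
  have hadj : ∀ a b : Fin n, G.Adj a b →
      a ≠ b ∧ ((a.val < N ∧ b.val < N) ∨ (N ≤ a.val ∧ N ≤ b.val)) := by
    intro a b hab
    exact hsub hab
  -- the B side
  set Bset : Finset (Fin n) := Finset.univ.filter (fun x => x.val < N) with hBset
  have hBcard : Bset.card ≤ N := aux_card_filter_lt N n
  set Sset : Finset (Fin n) := Finset.univ.filter (fun x => N ≤ x.val) with hSset
  have hScard : Sset.card ≤ k + 1 := by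
    have h := aux_card_filter_le N n
    rw [hSset]
    omega
  -- degree bounds
  have degS : ∀ m : Fin n, N ≤ m.val → G.degree m ≤ k := by
    intro m hm
    have hsubs : G.neighborFinset m ⊆ Sset.erase m := by
      intro x hx
      rw [SimpleGraph.mem_neighborFinset] at hx
      obtain ⟨hne', hcase⟩ := hadj m x hx
      rcases hcase with ⟨h1, _⟩ | ⟨_, h2⟩
      · omega
      · exact Finset.mem_erase.mpr ⟨(G.ne_of_adj hx).symm, by simp [hSset, h2]⟩
    calc G.degree m = (G.neighborFinset m).card := rfl
      _ ≤ (Sset.erase m).card := Finset.card_le_card hsubs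
      _ ≤ Sset.card - 1 := by
          rw [Finset.card_erase_of_mem (by simp [hSset, hm])]
      _ ≤ k := by omega
  have degB : ∀ m : Fin n, m.val < N → G.neighborFinset m ⊆ Bset.erase m := by
    intro m hm x hx
    rw [SimpleGraph.mem_neighborFinset] at hx
    obtain ⟨hne', hcase⟩ := hadj m x hx
    rcases hcase with ⟨_, h2⟩ | ⟨h1, _⟩
    · exact Finset.mem_erase.mpr ⟨(G.ne_of_adj hx).symm, by simp [hBset, h2]⟩
    · omega
  have degBcard : ∀ m : Fin n, m.val < N → G.degree m + 1 ≤ N := by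
    intro m hm
    have h1 : G.degree m ≤ (Bset.erase m).card := Finset.card_le_card (degB m hm)
    rw [Finset.card_erase_of_mem (by simp [hBset, hm])] at h1
    have hmB : m ∈ Bset := by simp [hBset, hm]
    have : 1 ≤ Bset.card := Finset.card_pos.mpr ⟨m, hmB⟩
    omega
  -- the missing edge
  have hlt : G < DUgraph (n-k-1) n := lt_of_le_of_ne hsub hne
  have hnle : ¬ SimpleGraph.IsSubgraph (DUgraph (n-k-1) n) G := hlt.not_ge
  unfold SimpleGraph.IsSubgraph at hnle
  push_neg at hnle
  obtain ⟨u, v, huv, hnadj⟩ := hnle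
  have huvne : u ≠ v := huv.1
  have huvadj : (u.val < N ∧ v.val < N) ∨ (N ≤ u.val ∧ N ≤ v.val) := by
    rcases huv.2 with h | h
    · left; exact ⟨by omega, by omega⟩
    · right; exact ⟨by omega, by omega⟩
  have hmindeg : ∀ m : Fin n, k ≤ G.degree m := fun m =>
    le_trans hδ (G.minDegree_le_degree m)
  have huB : u.val < N ∧ v.val < N := by
    rcases huvadj with h | ⟨h1, h2⟩
    · exact h
    · exfalso
      have hsubs : G.neighborFinset u ⊆ (Sset.erase u).erase v := by
        intro x hx
        rw [SimpleGraph.mem_neighborFinset] at hx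
        obtain ⟨hne', hcase⟩ := hadj u x hx
        have hxv : x ≠ v := by
          rintro rfl
          exact hnadj hx
        rcases hcase with ⟨hc, _⟩ | ⟨_, hc⟩
        · omega
        · exact Finset.mem_erase.mpr ⟨hxv,
            Finset.mem_erase.mpr ⟨(G.ne_of_adj hx).symm, by simp [hSset, hc]⟩⟩
      have h3 : G.degree u ≤ ((Sset.erase u).erase v).card := Finset.card_le_card hsubs
      have hvmem : v ∈ Sset.erase u := Finset.mem_erase.mpr ⟨huvne.symm, by simp [hSset, h2]⟩
      have humem : u ∈ Sset := by simp [hSset, h1]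
      rw [Finset.card_erase_of_mem hvmem, Finset.card_erase_of_mem humem] at h3
      have := hmindeg u
      omega
  obtain ⟨huN, hvN⟩ := huB
  -- degree bounds at u and v
  have degUV : ∀ w : Fin n, (w = u ∨ w = v) → G.degree w + 2 ≤ N := by
    intro w hw
    have hwN : w.val < N := by rcases hw with rfl | rfl <;> assumption
    have hsubs : G.neighborFinset w ⊆ (Bset.erase u).erase v := by
      intro x hx
      have hx' := hx
      rw [SimpleGraph.mem_neighborFinset] at hx'
      have hxB := degB w hwN hx
      have hxu : x ≠ u := by
        rintro rfl
        rcases hw with rfl | rfl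
        · exact (G.ne_of_adj hx') rfl
        · exact hnadj hx'.symm
      have hxv : x ≠ v := by
        rintro rfl
        rcases hw with rfl | rfl
        · exact hnadj hx'
        · exact (G.ne_of_adj hx') rfl
      exact Finset.mem_erase.mpr ⟨hxv, Finset.mem_erase.mpr ⟨hxu,
        Finset.mem_of_mem_erase hxB⟩⟩
    have h3 : G.degree w ≤ ((Bset.erase u).erase v).card := Finset.card_le_card hsubs
    have hvmem : v ∈ Bset.erase u := Finset.mem_erase.mpr ⟨huvne.symm, by simp [hBset, hvN]⟩
    have humem : u ∈ Bset := by simp [hBset, huN]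
    rw [Finset.card_erase_of_mem hvmem, Finset.card_erase_of_mem humem] at h3
    have : 2 ≤ Bset.card := by
      apply Finset.one_lt_card.mpr
      exact ⟨u, humem, v, by simp [hBset, hvN], huvne⟩
    omega
  -- now the main case analysis
  by_cases hjS : N ≤ j.val
  · -- j in the small side
    have hdj : G.degree j ≤ k := degS j hjS
    calc (∑ m ∈ G.neighborFinset j, (G.degree m : ℝ))
        ≤ ∑ m ∈ G.neighborFinset j, (k : ℝ) := by
          apply Finset.sum_le_sum
          intro m hm
          rw [SimpleGraph.mem_neighborFinset] at hm
          have hmS : N ≤ m.val := by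
            rcases (hadj j m hm).2 with h | h
            · omega
            · exact h.2
          exact_mod_cast degS m hmS
      _ = (G.degree j : ℝ) * k := by
          rw [Finset.sum_const, nsmul_eq_mul]; rfl
      _ ≤ (k:ℝ) * k := by
          apply mul_le_mul_of_nonneg_right _ (by positivity)
          exact_mod_cast hdj
      _ ≤ D^2 - 2 := by nlinarith
  · push_neg at hjS
    have hdegle : ∀ m ∈ G.neighborFinset j, (G.degree m : ℝ) ≤ (N:ℝ) - 1 := by
      intro m hm
      rw [SimpleGraph.mem_neighborFinset] at hm
      have hmB : m.val < N := by
        rcases (hadj j m hm).2 with h | h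
        · exact h.2
        · omega
      have := degBcard m hmB
      have h2 : ((G.degree m + 1 : ℕ) : ℝ) ≤ (N : ℝ) := by exact_mod_cast this
      push_cast at h2
      linarith
    by_cases hju : j = u ∨ j = v
    · -- j is an endpoint of the missing edge
      have hsubs : G.neighborFinset j ⊆ (Bset.erase u).erase v := by
        intro x hx
        have hx' := hx
        rw [SimpleGraph.mem_neighborFinset] at hx'
        have hxB := degB j hjS hx
        have hxu : x ≠ u := by
          rintro rfl
          rcases hju with rfl | rfl
          · exact (G.ne_of_adj hx') rfl
          · exact hnadj hx'.symm
        have hxv : x ≠ v := by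
          rintro rfl
          rcases hju with rfl | rfl
          · exact hnadj hx'
          · exact (G.ne_of_adj hx') rfl
        exact Finset.mem_erase.mpr ⟨hxv, Finset.mem_erase.mpr ⟨hxu,
          Finset.mem_of_mem_erase hxB⟩⟩
      have hcard : (G.neighborFinset j).card + 2 ≤ N := by
        have h3 := Finset.card_le_card hsubs
        have hvmem : v ∈ Bset.erase u := Finset.mem_erase.mpr ⟨huvne.symm, by simp [hBset, hvN]⟩
        have humem : u ∈ Bset := by simp [hBset, huN]
        rw [Finset.card_erase_of_mem hvmem, Finset.card_erase_of_mem humem] at h3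
        have : 2 ≤ Bset.card := Finset.one_lt_card.mpr
          ⟨u, humem, v, by simp [hBset, hvN], huvne⟩
        omega
      have hcard' : ((G.neighborFinset j).card : ℝ) ≤ (N:ℝ) - 2 := by
        have h2 : (((G.neighborFinset j).card + 2 : ℕ) : ℝ) ≤ (N : ℝ) := by exact_mod_cast hcard
        push_cast at h2; linarith
      calc (∑ m ∈ G.neighborFinset j, (G.degree m : ℝ))
          ≤ ∑ m ∈ G.neighborFinset j, ((N:ℝ) - 1) := Finset.sum_le_sum hdegle
        _ = ((G.neighborFinset j).card : ℝ) * ((N:ℝ) - 1) := by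
            rw [Finset.sum_const, nsmul_eq_mul]
        _ ≤ ((N:ℝ) - 2) * ((N:ℝ) - 1) := by
            apply mul_le_mul_of_nonneg_right hcard'
            rw [hNcast]; linarith
        _ ≤ D^2 - 2 := by rw [hNcast]; simp only [hD]; nlinarith
    · push_neg at hju
      obtain ⟨hju1, hju2⟩ := hju
      set T := G.neighborFinset j with hT
      set T' := (T.erase u).erase v with hT'
      have hT'sub : T' ⊆ T := (Finset.erase_subset _ _).trans (Finset.erase_subset _ _)
      have hsplit : (∑ m ∈ T, (G.degree m : ℝ)) =
          (∑ m ∈ T', (G.degree m : ℝ)) + (∑ m ∈ T \ T', (G.degree m : ℝ)) := by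
        rw [add_comm, Finset.sum_sdiff hT'sub]
      have hTdiff : T \ T' ⊆ {u, v} := by
        intro x hx
        rw [Finset.mem_sdiff] at hx
        obtain ⟨hx1, hx2⟩ := hx
        simp only [hT', Finset.mem_erase, not_and] at hx2
        by_cases h1 : x = v
        · simp [h1]
        · by_cases h2 : x = u
          · simp [h2]
          · exfalso; exact h1 (by tauto)
      have hdiffsum : (∑ m ∈ T \ T', (G.degree m : ℝ)) ≤
          (G.degree u : ℝ) + (G.degree v : ℝ) := by
        calc (∑ m ∈ T \ T', (G.degree m : ℝ))
            ≤ ∑ m ∈ ({u, v} : Finset (Fin n)), (G.degree m : ℝ) := by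
              apply Finset.sum_le_sum_of_subset_of_nonneg hTdiff
              intro x _ _; positivity
          _ = (G.degree u : ℝ) + (G.degree v : ℝ) := Finset.sum_pair huvne
      have hdegu : (G.degree u : ℝ) ≤ (N:ℝ) - 2 := by
        have := degUV u (Or.inl rfl)
        have h2 : ((G.degree u + 2 : ℕ) : ℝ) ≤ (N : ℝ) := by exact_mod_cast this
        push_cast at h2; linarith
      have hdegv : (G.degree v : ℝ) ≤ (N:ℝ) - 2 := by
        have := degUV v (Or.inr rfl)
        have h2 : ((G.degree v + 2 : ℕ) : ℝ) ≤ (N : ℝ) := by exact_mod_cast this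
        push_cast at h2; linarith
      -- card of T'
      have hT'card : (T'.card : ℝ) ≤ (N:ℝ) - 3 := by
        have hsubs : T' ⊆ ((Bset.erase j).erase u).erase v := by
          intro x hx
          have hxT : x ∈ T := hT'sub hx
          have hxB := degB j hjS hxT
          simp only [hT', Finset.mem_erase] at hx
          exact Finset.mem_erase.mpr ⟨hx.1, Finset.mem_erase.mpr ⟨hx.2.1, hxB⟩⟩
        have h3 := Finset.card_le_card hsubs
        have hjmem : j ∈ Bset := by simp [hBset, hjS]
        have humem : u ∈ Bset.erase j := Finset.mem_erase.mpr ⟨Ne.symm hju1, by simp [hBset, huN]⟩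
        have hvmem : v ∈ (Bset.erase j).erase u := Finset.mem_erase.mpr ⟨huvne.symm,
          Finset.mem_erase.mpr ⟨Ne.symm hju2, by simp [hBset, hvN]⟩⟩
        rw [Finset.card_erase_of_mem hvmem, Finset.card_erase_of_mem humem,
          Finset.card_erase_of_mem hjmem] at h3
        have hB3 : 3 ≤ Bset.card := by
          have : ({j, u, v} : Finset (Fin n)) ⊆ Bset := by
            intro x hx
            simp only [Finset.mem_insert, Finset.mem_singleton] at hx
            rcases hx with rfl | rfl | rfl
            · exact hjmem
            · simp [hBset, huN]
            · simp [hBset, hvN]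
          have hc : ({j, u, v} : Finset (Fin n)).card = 3 := by
            rw [Finset.card_insert_of_notMem (by simp [hju1, hju2]),
              Finset.card_insert_of_notMem (by simp [huvne])]
            rfl
          calc 3 = ({j, u, v} : Finset (Fin n)).card := hc.symm
            _ ≤ Bset.card := Finset.card_le_card this
        have h4 : T'.card + 3 ≤ N := by omega
        have h5 : ((T'.card + 3 : ℕ) : ℝ) ≤ (N : ℝ) := by exact_mod_cast h4
        push_cast at h5
        linarith
      have hT'sum : (∑ m ∈ T', (G.degree m : ℝ)) ≤ ((N:ℝ) - 3) * ((N:ℝ) - 1) := by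
        calc (∑ m ∈ T', (G.degree m : ℝ))
            ≤ ∑ m ∈ T', ((N:ℝ) - 1) := by
              apply Finset.sum_le_sum
              intro m hm
              exact hdegle m (hT'sub hm)
          _ = (T'.card : ℝ) * ((N:ℝ) - 1) := by rw [Finset.sum_const, nsmul_eq_mul]
          _ ≤ ((N:ℝ) - 3) * ((N:ℝ) - 1) := by
              apply mul_le_mul_of_nonneg_right hT'card
              rw [hNcast]; linarith
      calc (∑ m ∈ T, (G.degree m : ℝ))
          = (∑ m ∈ T', (G.degree m : ℝ)) + (∑ m ∈ T \ T', (G.degree m : ℝ)) := hsplit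
        _ ≤ ((N:ℝ) - 3) * ((N:ℝ) - 1) + ((N:ℝ) - 2 + ((N:ℝ) - 2)) := by
            have := hdiffsum
            linarith
        _ ≤ D^2 - 2 := by rw [hNcast]; simp only [hD]; nlinarith


/-- A proper spanning subgraph of `K_{n-k-1} + K_{k+1}` with minimum degree at
least `k` has spectral radius less than `n - k - 2`. -/
theorem stmt_12 (k n : ℕ) (hk : 1 ≤ k)
    (hn : (n : ℝ) ≥ (k : ℝ) ^ 3 / 2 + (k : ℝ) ^ 2 / 2 + k + 5)
    (G : SimpleGraph (Fin n)) [DecidableRel G.Adj]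
    (hsub : G ≤ DUgraph (n - k - 1) n) (hδ : k ≤ G.minDegree)
    (hne : G ≠ DUgraph (n - k - 1) n) :
    specRad G < (n : ℝ) - k - 2 := by
  have hk1 : (1:ℝ) ≤ (k:ℝ) := by exact_mod_cast hk
  have hn2 : 2*k+5 ≤ n := by
    have h1 : ((2*k+5 : ℕ) : ℝ) ≤ (n : ℝ) := by
      push_cast
      nlinarith [sq_nonneg ((k:ℝ) - 1), sq_nonneg (k:ℝ)]
    exact_mod_cast h1
  have hnpos : 0 < n := by omega
  haveI : Nonempty (Fin n) := Fin.pos_iff_nonempty.mp hnpos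
  set D : ℝ := (n:ℝ) - k - 2 with hD
  have hDk : (k:ℝ) + 3 ≤ D := by
    have : ((2*k+5 : ℕ) : ℝ) ≤ (n : ℝ) := by exact_mod_cast hn2
    push_cast at this
    simp only [hD]; linarith
  have hDpos : 0 < D := by linarith
  have hkey : ∀ j : Fin n, (∑ m ∈ G.neighborFinset j, (G.degree m : ℝ)) ≤ D^2 - 2 :=
    fun j => aux_sum_deg_bound k n hk hn2 G hsub hδ hne j
  unfold specRad
  have hsqrt : Real.sqrt (D^2 - 2) < D := (Real.sqrt_lt' hDpos).mpr (by nlinarith)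
  refine lt_of_le_of_lt (ciSup_le fun i => ?_) hsqrt
  set A : Matrix (Fin n) (Fin n) ℝ :=
    @SimpleGraph.adjMatrix ℝ (Fin n) G (Classical.decRel G.Adj) _ _ with hA
  have habs : ∀ a b : Fin n, |A a b| = if G.Adj a b then (1:ℝ) else 0 := by
    intro a b
    by_cases h : G.Adj a b <;> simp [hA, SimpleGraph.adjMatrix, h]
  have hrow : ∀ l : Fin n, (∑ m, |A l m|) = (G.degree l : ℝ) := by
    intro l
    simp only [habs]
    rw [Finset.sum_boole]
    congr 1
    rw [SimpleGraph.degree, SimpleGraph.neighborFinset_eq_filter]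
  have hC : ∀ j : Fin n, (∑ l, |A j l| * (∑ m, |A l m|)) ≤ D^2 - 2 := by
    intro j
    have heq : (∑ l, |A j l| * (∑ m, |A l m|)) = ∑ m ∈ G.neighborFinset j, (G.degree m : ℝ) := by
      rw [SimpleGraph.neighborFinset_eq_filter, Finset.sum_filter]
      apply Finset.sum_congr rfl
      intro l _
      rw [habs, hrow]
      split <;> simp
    rw [heq]
    exact hkey j
  exact aux_eig_sq_le hnpos A _ (D^2 - 2) hC i
end
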